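/- arXiv:2003.00267 — 6 statements merged into one kernel-verified Lean document; each statement's English description precedes it below -/
import Mathlib

section
/- Let C be a sum closed permutation class. For every n ≥ 1, ∑_{π ∈ C_n} a(π) = n · ∑_{π ∈ C_n} 1/χ(π), as an equality of rational numbers, where both sums are over all permutations of size n in C. -/
/-- `σ : ℤ → ℤ` is an affine permutation of size `n` (values indexed 1,…,n). -/
def IsAffinePerm (n : ℕ) (σ : ℤ → ℤ) : Prop :=
  Function.Bijective σ ∧ (∀ i : ℤ, σ (i + n) = σ i + n) ∧
    (∑ i ∈ Finset.Icc (1 : ℤ) (n : ℤ), σ i) = ∑ i ∈ Finset.Icc (1 : ℤ) (n : ℤ), i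

/-- Bounded affine permutation of size `n`. -/
def IsBoundedAffinePerm (n : ℕ) (σ : ℤ → ℤ) : Prop :=
  IsAffinePerm n σ ∧ ∀ i : ℤ, |σ i - i| < (n : ℤ)

/-- Ordinary pattern containment. -/
def PermContains {n k : ℕ} (π : Equiv.Perm (Fin n)) (τ : Equiv.Perm (Fin k)) : Prop :=
  ∃ f : Fin k → Fin n, StrictMono f ∧ ∀ s t : Fin k, τ s < τ t ↔ π (f s) < π (f t)

/-- A function `σ : ℤ → ℤ` contains the ordinary pattern `τ`. -/
def AffContains {k : ℕ} (σ : ℤ → ℤ) (τ : Equiv.Perm (Fin k)) : Prop :=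
  ∃ f : Fin k → ℤ, StrictMono f ∧ ∀ s t : Fin k, τ s < τ t ↔ σ (f s) < σ (f t)

/-- The shift `Σ^r σ`. -/
def shiftPerm (r : ℤ) (σ : ℤ → ℤ) : ℤ → ℤ := fun i => σ (i - r) + r

/-- The infinite sum `⊕π : ℤ → ℤ` of a permutation `π` of size `n ≥ 1`,
with the convention that `π` acts (1-indexed) on `{1,…,n}`. -/
def infiniteSum {n : ℕ} (hn : 0 < n) (π : Equiv.Perm (Fin n)) : ℤ → ℤ := fun i =>
  ((π ⟨((i - 1) % (n : ℤ)).toNat, by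
      have h0 : (0 : ℤ) < (n : ℤ) := by exact_mod_cast hn
      have h1 : 0 ≤ (i - 1) % (n : ℤ) := Int.emod_nonneg _ h0.ne'
      have h2 : (i - 1) % (n : ℤ) < (n : ℤ) := Int.emod_lt_of_pos _ h0
      omega⟩ : Fin n).val : ℤ) + 1 + (n : ℤ) * ((i - 1) / (n : ℤ))

/-- `aff(C)`: all shifts of infinite sums of members of `C`. -/
def AffOfClass (C : (n : ℕ) → Set (Equiv.Perm (Fin n))) : Set (ℤ → ℤ) :=
  {σ | ∃ (m : ℕ) (hm : 0 < m) (π : Equiv.Perm (Fin m)) (r : ℤ),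
      π ∈ C m ∧ σ = shiftPerm r (infiniteSum hm π)}

/-- The direct sum `σ ⊕ ρ` of two permutations. -/
def permDirectSum {a b : ℕ} (σ : Equiv.Perm (Fin a)) (ρ : Equiv.Perm (Fin b)) :
    Equiv.Perm (Fin (a + b)) :=
  finSumFinEquiv.symm.trans ((Equiv.sumCongr σ ρ).trans finSumFinEquiv)

/-- A permutation is sum-indecomposable if it is not a sum of two permutations of nonzero size. -/
def IsSumIndecomposable {n : ℕ} (π : Equiv.Perm (Fin n)) : Prop :=
  ¬ ∃ (a b : ℕ) (_ : 0 < a) (_ : 0 < b) (h : a + b = n)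
      (σ : Equiv.Perm (Fin a)) (ρ : Equiv.Perm (Fin b)),
      π = (finCongr h).permCongr (permDirectSum σ ρ)

/-- `π` maps the first `d` positions onto the first `d` values. -/
def IsPrefixInvariant {n : ℕ} (π : Equiv.Perm (Fin n)) (d : ℕ) : Prop :=
  ∀ i : Fin n, ((π i : ℕ) < d ↔ (i : ℕ) < d)

/-- `a(π)`: the size of the first sum-indecomposable block of `π`. -/
noncomputable def firstBlockSize {n : ℕ} (π : Equiv.Perm (Fin n)) : ℕ :=
  sInf {d : ℕ | 1 ≤ d ∧ d ≤ n ∧ IsPrefixInvariant π d}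

/-- `χ(π)`: the number of sum-indecomposable blocks of `π`. -/
noncomputable def numBlocks {n : ℕ} (π : Equiv.Perm (Fin n)) : ℕ :=
  Set.ncard {d : ℕ | 1 ≤ d ∧ d ≤ n ∧ IsPrefixInvariant π d}

/-- `C` is a permutation class: it is closed under pattern containment. -/
def IsPermClass (C : (n : ℕ) → Set (Equiv.Perm (Fin n))) : Prop :=
  ∀ (n k : ℕ) (π : Equiv.Perm (Fin n)) (τ : Equiv.Perm (Fin k)),
    π ∈ C n → PermContains π τ → τ ∈ C k

/-- `C` is sum closed. -/
def IsSumClosed (C : (n : ℕ) → Set (Equiv.Perm (Fin n))) : Prop :=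
  ∀ (a b : ℕ) (σ : Equiv.Perm (Fin a)) (ρ : Equiv.Perm (Fin b)),
    σ ∈ C a → ρ ∈ C b → permDirectSum σ ρ ∈ C (a + b)

/-- The infinite increasing oscillation `𝒪`. -/
def oscillO : ℤ → ℤ := fun i => if Odd i then i + 2 else i - 2

/-- An affine permutation is decomposable if it is a shift of an infinite sum. -/
def IsDecomposableAffine (ω : ℤ → ℤ) : Prop :=
  ∃ (r : ℤ) (m : ℕ) (hm : 0 < m) (π : Equiv.Perm (Fin m)),
    ω = shiftPerm r (infiniteSum hm π)

/-- Containment of one `ℤ → ℤ` permutation in another. -/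
def ContainsAffine (ω ω' : ℤ → ℤ) : Prop :=
  ∃ φ φ' : ℤ → ℤ, StrictMono φ ∧ StrictMono φ' ∧ ∀ i : ℤ, ω (φ i) = φ' (ω' i)

/-- The inversion graph of a function `ℤ → ℤ`. -/
def invGraph (ω : ℤ → ℤ) : SimpleGraph ℤ where
  Adj i j := (i < j ∧ ω j < ω i) ∨ (j < i ∧ ω i < ω j)
  symm := ⟨fun _ _ h => Or.symm h⟩
  loopless := ⟨by rintro i (⟨h, -⟩ | ⟨h, -⟩) <;> exact lt_irrefl i h⟩

/-- Number of excedances of a permutation (1-indexed: positions `i` with `π(i) > i`). -/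
def excCount {n : ℕ} (π : Equiv.Perm (Fin n)) : ℕ :=
  (Finset.univ.filter fun i => i < π i).card

/-- Number of fixed points of a permutation. -/
def numFixedPoints {n : ℕ} (π : Equiv.Perm (Fin n)) : ℕ :=
  (Finset.univ.filter fun i => π i = i).card

/-- Eulerian number `a(n,k)`: permutations of size `n` with `k` excedances. -/
noncomputable def eulerianA (n k : ℕ) : ℕ := Nat.card {π : Equiv.Perm (Fin n) // excCount π = k}

/-- Derangement Eulerian number `d(n,k)`. -/
noncomputable def derangD (n k : ℕ) : ℕ :=
  Nat.card {π : Equiv.Perm (Fin n) // (∀ i, π i ≠ i) ∧ excCount π = k}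


set_option linter.unusedSectionVars false

namespace Stmt6

open Fin.NatCast

def phi (n d e : ℕ) : ℕ := if e + d ≤ n then e + d else e + d - n

def psi (n d : ℕ) : ℕ := if d = n then n else n - d

variable {n : ℕ} [NeZero n]

/-- rotation: `rotp d π x = π (x + d) - d`. -/
def rotp (d : ℕ) (π : Equiv.Perm (Fin n)) : Equiv.Perm (Fin n) :=
  (Equiv.addRight (d : Fin n)).trans (π.trans (Equiv.subRight (d : Fin n)))

lemma rotp_apply (d : ℕ) (π : Equiv.Perm (Fin n)) (x : Fin n) :
    rotp d π x = π (x + (d : Fin n)) - (d : Fin n) := rfl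

lemma rotp_rotp (d e : ℕ) (π : Equiv.Perm (Fin n)) :
    rotp e (rotp d π) = rotp (e + d) π := by
  ext x
  simp only [rotp_apply, Nat.cast_add]
  rw [sub_add_eq_sub_sub_swap, add_comm (e : Fin n) (d : Fin n), ← add_assoc,
    add_right_comm x (e : Fin n) (d : Fin n)]

lemma rotp_n (π : Equiv.Perm (Fin n)) : rotp n π = π := by
  ext x
  simp [rotp_apply]

lemma npos : 0 < n := Nat.pos_of_ne_zero (NeZero.ne n)

lemma rotp_val_lo {d : ℕ} (hdn : d ≤ n) {π : Equiv.Perm (Fin n)}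
    (hpi : IsPrefixInvariant π d) {x : Fin n} (hx : x.val < n - d) :
    ∃ hlt : x.val + d < n,
      d ≤ (π ⟨x.val + d, hlt⟩).val ∧ (rotp d π x).val = (π ⟨x.val + d, hlt⟩).val - d := by
  have hlt : x.val + d < n := by omega
  have hdlt : d < n := by omega
  refine ⟨hlt, ?_, ?_⟩
  · have := hpi ⟨x.val + d, hlt⟩
    simp only at this
    omega
  · have hval : d ≤ (π ⟨x.val + d, hlt⟩).val := by
      have := hpi ⟨x.val + d, hlt⟩; simp only at this; omega
    have h1 : (x + (d : Fin n)) = ⟨x.val + d, hlt⟩ := by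
      rw [Fin.ext_iff, Fin.add_def]
      simp [Fin.val_natCast, Nat.mod_eq_of_lt hdlt, Nat.mod_eq_of_lt hlt]
    rw [rotp_apply, h1, Fin.sub_def]
    simp only [Fin.val_natCast, Nat.mod_eq_of_lt hdlt]
    have hv : (π ⟨x.val + d, hlt⟩).val < n := (π _).isLt
    have : n - d + (π ⟨x.val + d, hlt⟩).val = ((π ⟨x.val + d, hlt⟩).val - d) + n := by omega
    rw [this, Nat.add_mod_right, Nat.mod_eq_of_lt (by omega)]

lemma rotp_val_hi {d : ℕ} (hd1 : 1 ≤ d) (hdn : d ≤ n) {π : Equiv.Perm (Fin n)}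
    (hpi : IsPrefixInvariant π d) {x : Fin n} (hx : n - d ≤ x.val) :
    ∃ hlt : x.val + d - n < n,
      (π ⟨x.val + d - n, hlt⟩).val < d ∧
      (rotp d π x).val = (π ⟨x.val + d - n, hlt⟩).val + (n - d) := by
  have hxn : x.val < n := x.isLt
  have hlt : x.val + d - n < n := by omega
  have hposd : x.val + d - n < d := by omega
  have hval : (π ⟨x.val + d - n, hlt⟩).val < d := by
    have := hpi ⟨x.val + d - n, hlt⟩; simp only at this; omega
  refine ⟨hlt, hval, ?_⟩
  have h1 : (x + (d : Fin n)) = ⟨x.val + d - n, hlt⟩ := by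
    rw [Fin.ext_iff, Fin.add_def]
    simp only [Fin.val_natCast]
    rcases Nat.lt_or_ge d n with h | h
    · rw [Nat.mod_eq_of_lt h]
      have : x.val + d = (x.val + d - n) + n := by omega
      rw [this, Nat.add_mod_right, Nat.mod_eq_of_lt hlt]
      omega
    · have hdn' : d = n := by omega
      subst hdn'
      rw [Nat.mod_self, Nat.add_zero, Nat.mod_eq_of_lt hxn]
      omega
  rw [rotp_apply, h1, Fin.sub_def]
  simp only [Fin.val_natCast]
  rcases Nat.lt_or_ge d n with h | h
  · rw [Nat.mod_eq_of_lt h, Nat.add_comm, Nat.mod_eq_of_lt (by omega)]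
  · have hdn' : d = n := by omega
    subst hdn'
    rw [Nat.mod_self, Nat.sub_zero, Nat.add_comm, Nat.add_mod_right,
      Nat.mod_eq_of_lt (by omega)]
    omega


lemma pi_rotp {d : ℕ} (hd1 : 1 ≤ d) (hdn : d ≤ n) {π : Equiv.Perm (Fin n)}
    (hpi : IsPrefixInvariant π d) {e : ℕ} (he1 : 1 ≤ e) (hen : e ≤ n) :
    IsPrefixInvariant (rotp d π) e ↔ IsPrefixInvariant π (phi n d e) := by
  unfold phi
  split_ifs with hcase
  · -- e + d ≤ n
    constructor
    · intro H i
      rcases Nat.lt_or_ge i.val d with hid | hid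
      · have := hpi i; omega
      · set x : Fin n := ⟨i.val - d, by omega⟩ with hxdef
        have hx : x.val < n - d := by simp only [hxdef]; omega
        obtain ⟨hlt, hge, hval⟩ := rotp_val_lo hdn hpi hx
        have hmk : (⟨x.val + d, hlt⟩ : Fin n) = i := Fin.ext (by simp [hxdef]; omega)
        rw [hmk] at hge hval
        have := H x
        simp only [hxdef] at this hval
        omega
    · intro H x
      rcases Nat.lt_or_ge x.val (n - d) with hx | hx
      · obtain ⟨hlt, hge, hval⟩ := rotp_val_lo hdn hpi hx
        have h2 := H ⟨x.val + d, hlt⟩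
        simp only at h2
        omega
      · obtain ⟨hlt, hsm, hval⟩ := rotp_val_hi hd1 hdn hpi hx
        have := x.isLt
        omega
  · -- e + d > n
    constructor
    · intro H i
      rcases Nat.lt_or_ge i.val d with hid | hid
      · set x : Fin n := ⟨i.val + n - d, by omega⟩ with hxdef
        have hx : n - d ≤ x.val := by simp only [hxdef]; omega
        obtain ⟨hlt, hsm, hval⟩ := rotp_val_hi hd1 hdn hpi hx
        have hmk : (⟨x.val + d - n, hlt⟩ : Fin n) = i := Fin.ext (by simp [hxdef]; omega)
        rw [hmk] at hsm hval
        have := H x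
        simp only [hxdef] at this hval
        omega
      · have := hpi i; omega
    · intro H x
      rcases Nat.lt_or_ge x.val (n - d) with hx | hx
      · obtain ⟨hlt, hge, hval⟩ := rotp_val_lo hdn hpi hx
        have := (π ⟨x.val + d, hlt⟩).isLt
        omega
      · obtain ⟨hlt, hsm, hval⟩ := rotp_val_hi hd1 hdn hpi hx
        have h2 := H ⟨x.val + d - n, hlt⟩
        simp only at h2
        have := x.isLt
        omega


lemma pi_symm {π : Equiv.Perm (Fin n)} {d : ℕ} (hpi : IsPrefixInvariant π d) (j : Fin n) :
    ((π.symm j : Fin n) : ℕ) < d ↔ (j : ℕ) < d := by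
  have := hpi (π.symm j)
  rw [Equiv.apply_symm_apply] at this
  exact this.symm

/-- the pattern of `π` on positions `[0,d)`. -/
def lowPerm (π : Equiv.Perm (Fin n)) (d : ℕ) (hd : d ≤ n)
    (hpi : IsPrefixInvariant π d) : Equiv.Perm (Fin d) where
  toFun i := ⟨(π ⟨i.val, lt_of_lt_of_le i.isLt hd⟩).val,
    (hpi ⟨i.val, lt_of_lt_of_le i.isLt hd⟩).2 i.isLt⟩
  invFun j := ⟨(π.symm ⟨j.val, lt_of_lt_of_le j.isLt hd⟩).val,
    (pi_symm hpi ⟨j.val, lt_of_lt_of_le j.isLt hd⟩).2 j.isLt⟩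
  left_inv i := by
    apply Fin.ext
    simp only [Fin.eta, Equiv.symm_apply_apply]
  right_inv j := by
    apply Fin.ext
    simp only [Fin.eta, Equiv.apply_symm_apply]

/-- the pattern of `π` on positions `[d,n)`. -/
def hiPerm (π : Equiv.Perm (Fin n)) (d : ℕ) (hd : d ≤ n)
    (hpi : IsPrefixInvariant π d) : Equiv.Perm (Fin (n - d)) where
  toFun i := ⟨(π ⟨i.val + d, by omega⟩).val - d, by
    have h1 := (π ⟨i.val + d, by omega⟩).isLt
    have h2 := hpi ⟨i.val + d, by omega⟩
    simp only at h2
    omega⟩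
  invFun j := ⟨(π.symm ⟨j.val + d, by omega⟩).val - d, by
    have h1 := (π.symm ⟨j.val + d, by omega⟩).isLt
    have h2 := pi_symm hpi ⟨j.val + d, by omega⟩
    simp only at h2
    omega⟩
  left_inv i := by
    apply Fin.ext
    have hge : d ≤ (π ⟨i.val + d, by omega⟩).val := by
      have := hpi ⟨i.val + d, by omega⟩; simp only at this; omega
    have hmk : (⟨(π ⟨i.val + d, by omega⟩).val - d + d, by omega⟩ : Fin n)
        = π ⟨i.val + d, by omega⟩ := Fin.ext (by simp; omega)
    simp only [hmk, Equiv.symm_apply_apply]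
    omega
  right_inv j := by
    apply Fin.ext
    have hge : d ≤ (π.symm ⟨j.val + d, by omega⟩).val := by
      have := pi_symm hpi ⟨j.val + d, by omega⟩; simp only at this; omega
    have hmk : (⟨(π.symm ⟨j.val + d, by omega⟩).val - d + d, by omega⟩ : Fin n)
        = π.symm ⟨j.val + d, by omega⟩ := Fin.ext (by simp; omega)
    simp only [hmk, Equiv.apply_symm_apply]
    omega

lemma contains_low (π : Equiv.Perm (Fin n)) (d : ℕ) (hd : d ≤ n)
    (hpi : IsPrefixInvariant π d) : PermContains π (lowPerm π d hd hpi) := by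
  refine ⟨fun i => ⟨i.val, lt_of_lt_of_le i.isLt hd⟩, ?_, ?_⟩
  · intro a b hab
    exact hab
  · intro s t
    exact Iff.rfl

lemma contains_hi (π : Equiv.Perm (Fin n)) (d : ℕ) (hd : d ≤ n)
    (hpi : IsPrefixInvariant π d) : PermContains π (hiPerm π d hd hpi) := by
  have hadd : ∀ i : Fin (n - d), i.val + d < n := fun i => by omega
  refine ⟨fun i => ⟨i.val + d, hadd i⟩, ?_, ?_⟩
  · intro a b hab
    simp only [Fin.lt_def] at *
    omega
  · intro s t
    dsimp only
    have es : ((hiPerm π d hd hpi s : Fin (n - d)) : ℕ)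
        = (π ⟨s.val + d, hadd s⟩).val - d := rfl
    have et : ((hiPerm π d hd hpi t : Fin (n - d)) : ℕ)
        = (π ⟨t.val + d, hadd t⟩).val - d := rfl
    have hs := hpi ⟨s.val + d, hadd s⟩
    have ht := hpi ⟨t.val + d, hadd t⟩
    simp only at hs ht
    rw [Fin.lt_def, Fin.lt_def, es, et]
    omega

lemma permDirectSum_val {a b : ℕ} (σ : Equiv.Perm (Fin a)) (ρ : Equiv.Perm (Fin b))
    (x : Fin (a + b)) :
    (permDirectSum σ ρ x).val =
      if h : x.val < a then (σ ⟨x.val, h⟩).val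
      else a + (ρ ⟨x.val - a, by omega⟩).val := by
  split_ifs with h
  · have hx : x = Fin.castAdd b ⟨x.val, h⟩ := Fin.ext rfl
    conv_lhs => rw [hx]
    simp only [permDirectSum, Equiv.trans_apply, finSumFinEquiv_symm_apply_castAdd,
      Equiv.sumCongr_apply, Sum.map_inl, finSumFinEquiv_apply_left, Fin.coe_castAdd]
  · have hx : x = Fin.natAdd a ⟨x.val - a, by omega⟩ := Fin.ext (by simp; omega)
    conv_lhs => rw [hx]
    simp only [permDirectSum, Equiv.trans_apply, finSumFinEquiv_symm_apply_natAdd,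
      Equiv.sumCongr_apply, Sum.map_inr, finSumFinEquiv_apply_right, Fin.coe_natAdd]

lemma rotp_mem {C : (n : ℕ) → Set (Equiv.Perm (Fin n))}
    (hclass : IsPermClass C) (hsum : IsSumClosed C)
    {π : Equiv.Perm (Fin n)} (hπ : π ∈ C n) {d : ℕ} (hd1 : 1 ≤ d) (hdn : d ≤ n)
    (hpi : IsPrefixInvariant π d) : rotp d π ∈ C n := by
  have h₁ : hiPerm π d hdn hpi ∈ C (n - d) :=
    hclass n (n - d) π _ hπ (contains_hi π d hdn hpi)
  have h₂ : lowPerm π d hdn hpi ∈ C d :=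
    hclass n d π _ hπ (contains_low π d hdn hpi)
  have hDS := hsum (n - d) d _ _ h₁ h₂
  refine hclass ((n - d) + d) n _ _ hDS ?_
  have heq : n = (n - d) + d := by omega
  have key : ∀ x : Fin n,
      (permDirectSum (hiPerm π d hdn hpi) (lowPerm π d hdn hpi) (Fin.cast heq x)).val
        = (rotp d π x).val := by
    intro x
    rcases Nat.lt_or_ge x.val (n - d) with hx | hx
    · obtain ⟨hlt, hge, hval⟩ := rotp_val_lo hdn hpi hx
      have e1 : (permDirectSum (hiPerm π d hdn hpi) (lowPerm π d hdn hpi)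
            (Fin.cast heq x)).val
          = ((hiPerm π d hdn hpi ⟨x.val, hx⟩ : Fin (n - d)) : ℕ) := by
        rw [permDirectSum_val, dif_pos (show ((Fin.cast heq x : Fin (n - d + d)) : ℕ) < n - d from hx)]
        exact congrArg (fun z => ((hiPerm π d hdn hpi z : Fin (n - d)) : ℕ)) (Fin.ext rfl)
      have e2 : ((hiPerm π d hdn hpi ⟨x.val, hx⟩ : Fin (n - d)) : ℕ)
          = (π ⟨x.val + d, hlt⟩).val - d := rfl
      rw [e1, e2, hval]
    · obtain ⟨hlt, hsm, hval⟩ := rotp_val_hi hd1 hdn hpi hx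
      have e1 : (permDirectSum (hiPerm π d hdn hpi) (lowPerm π d hdn hpi)
            (Fin.cast heq x)).val
          = (n - d) + ((lowPerm π d hdn hpi ⟨x.val + d - n, by omega⟩ : Fin d) : ℕ) := by
        rw [permDirectSum_val,
          dif_neg (show ¬ ((Fin.cast heq x : Fin (n - d + d)) : ℕ) < n - d from not_lt.2 hx)]
        congr 1
        exact congrArg (fun z => ((lowPerm π d hdn hpi z : Fin d) : ℕ)) (Fin.ext (by
          show ((Fin.cast heq x : Fin (n - d + d)) : ℕ) - (n - d) = x.val + d - n
          rw [Fin.coe_cast]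
          omega))
      have e2 : ((lowPerm π d hdn hpi ⟨x.val + d - n, by omega⟩ : Fin d) : ℕ)
          = (π ⟨x.val + d - n, hlt⟩).val := rfl
      rw [e1, e2, hval]
      omega
  refine ⟨fun x => Fin.cast heq x, ?_, ?_⟩
  · intro s t hst
    exact hst
  · intro s t
    dsimp only
    have k1 := key s
    have k2 := key t
    simp only [Fin.lt_def]
    omega


noncomputable def Bset (π : Equiv.Perm (Fin n)) : Finset ℕ :=
  @Finset.filter _ (fun d => IsPrefixInvariant π d) (Classical.decPred _) (Finset.Icc 1 n)

lemma mem_Bset {π : Equiv.Perm (Fin n)} {d : ℕ} :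
    d ∈ Bset π ↔ 1 ≤ d ∧ d ≤ n ∧ IsPrefixInvariant π d := by
  simp [Bset, Finset.mem_filter, and_assoc]

lemma pi_nn (π : Equiv.Perm (Fin n)) : IsPrefixInvariant π n := by
  intro i; simp [i.isLt, (π i).isLt]

lemma n_mem_Bset (π : Equiv.Perm (Fin n)) : n ∈ Bset π :=
  mem_Bset.2 ⟨Nat.pos_of_ne_zero (NeZero.ne n), le_refl n, pi_nn π⟩

lemma Bset_nonempty (π : Equiv.Perm (Fin n)) : (Bset π).Nonempty := ⟨n, n_mem_Bset π⟩

lemma Bset_coe (π : Equiv.Perm (Fin n)) :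
    {d : ℕ | 1 ≤ d ∧ d ≤ n ∧ IsPrefixInvariant π d} = ↑(Bset π) := by
  ext d; simp [mem_Bset]

lemma numBlocks_eq (π : Equiv.Perm (Fin n)) : numBlocks π = (Bset π).card := by
  rw [numBlocks, Bset_coe, Set.ncard_coe_finset]

lemma fBS_mem (π : Equiv.Perm (Fin n)) : firstBlockSize π ∈ Bset π := by
  have h : firstBlockSize π ∈ {d : ℕ | 1 ≤ d ∧ d ≤ n ∧ IsPrefixInvariant π d} :=
    Nat.sInf_mem ⟨n, by rw [Bset_coe]; exact_mod_cast n_mem_Bset π⟩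
  rw [Bset_coe] at h; exact_mod_cast h

lemma fBS_le {π : Equiv.Perm (Fin n)} {d : ℕ} (hd : d ∈ Bset π) : firstBlockSize π ≤ d :=
  Nat.sInf_le (by rw [Bset_coe]; exact_mod_cast hd)

/-- the next breakpoint after `d`. -/
noncomputable def nextB (π : Equiv.Perm (Fin n)) (d : ℕ) : ℕ :=
  sInf {b : ℕ | b ∈ Bset π ∧ d < b}

lemma nextB_spec {π : Equiv.Perm (Fin n)} {d : ℕ} (hdn : d < n) :
    nextB π d ∈ Bset π ∧ d < nextB π d := by
  exact Nat.sInf_mem (⟨n, n_mem_Bset π, hdn⟩ :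
    Set.Nonempty {b : ℕ | b ∈ Bset π ∧ d < b})

lemma nextB_le {π : Equiv.Perm (Fin n)} {d b : ℕ} (hb : b ∈ Bset π) (hdb : d < b) :
    nextB π d ≤ b := Nat.sInf_le ⟨hb, hdb⟩

lemma fBS_rotp {π : Equiv.Perm (Fin n)} {d : ℕ} (hd : d ∈ Bset π) (hdn : d < n) :
    firstBlockSize (rotp d π) = nextB π d - d := by
  obtain ⟨hd1, hdn', hpi⟩ := mem_Bset.1 hd
  obtain ⟨hnb, hdnb⟩ := nextB_spec (π := π) hdn
  obtain ⟨hnb1, hnbn, hnbpi⟩ := mem_Bset.1 hnb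
  have he0 : nextB π d - d ∈ Bset (rotp d π) := by
    rw [mem_Bset]
    refine ⟨by omega, by omega, ?_⟩
    rw [pi_rotp hd1 hdn' hpi (by omega) (by omega)]
    have : phi n d (nextB π d - d) = nextB π d := by unfold phi; split_ifs <;> omega
    rw [this]; exact hnbpi
  have hub : firstBlockSize (rotp d π) ≤ nextB π d - d := fBS_le he0
  have hmem := fBS_mem (rotp d π)
  obtain ⟨hm1, hmn, hmpi⟩ := mem_Bset.1 hmem
  by_contra hne
  have hmlt : firstBlockSize (rotp d π) < nextB π d - d := by omega
  set m := firstBlockSize (rotp d π) with hm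
  have hpim : IsPrefixInvariant π (phi n d m) := (pi_rotp hd1 hdn' hpi hm1 hmn).1 hmpi
  have hphi : phi n d m = m + d := by unfold phi; split_ifs <;> omega
  rw [hphi] at hpim
  have : nextB π d ≤ m + d := nextB_le (mem_Bset.2 ⟨by omega, by omega, hpim⟩) (by omega)
  omega

lemma fBS_rotp_n (π : Equiv.Perm (Fin n)) :
    firstBlockSize (rotp n π) = firstBlockSize π := by rw [rotp_n]

/-- The telescoping gap-sum identity. -/
lemma gap_sum (π : Equiv.Perm (Fin n)) :
    ∑ d ∈ Bset π, firstBlockSize (rotp d π) = n := by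
  classical
  have hmem_n := n_mem_Bset π
  have hsplit := Finset.add_sum_erase (Bset π) (fun d => firstBlockSize (rotp d π)) hmem_n
  -- bijection: d ∈ (Bset π).erase n  ↦  nextB π d ∈ (Bset π).erase (firstBlockSize π)
  have hbij : ∑ d ∈ (Bset π).erase n, ((nextB π d : ℤ)) =
      ∑ b ∈ (Bset π).erase (firstBlockSize π), (b : ℤ) := by
    refine Finset.sum_bij (fun d _ => nextB π d) ?_ ?_ ?_ ?_
    · intro d hd
      have hd' := Finset.mem_erase.1 hd
      have hdn : d < n := lt_of_le_of_ne (mem_Bset.1 hd'.2).2.1 hd'.1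
      obtain ⟨h1, h2⟩ := nextB_spec (π := π) hdn
      refine Finset.mem_erase.2 ⟨?_, h1⟩
      have := fBS_le hd'.2
      omega
    · intro d₁ hd₁ d₂ hd₂ heq
      have hd₁' := Finset.mem_erase.1 hd₁
      have hd₂' := Finset.mem_erase.1 hd₂
      have hdn₁ : d₁ < n := lt_of_le_of_ne (mem_Bset.1 hd₁'.2).2.1 hd₁'.1
      have hdn₂ : d₂ < n := lt_of_le_of_ne (mem_Bset.1 hd₂'.2).2.1 hd₂'.1
      obtain ⟨hm₁, hl₁⟩ := nextB_spec (π := π) hdn₁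
      obtain ⟨hm₂, hl₂⟩ := nextB_spec (π := π) hdn₂
      by_contra hne
      rcases Nat.lt_or_ge d₁ d₂ with h | h
      · have := nextB_le (π := π) hd₂'.2 h; omega
      · have h' : d₂ < d₁ := by omega
        have := nextB_le (π := π) hd₁'.2 h'; omega
    · intro b hb
      have hb' := Finset.mem_erase.1 hb
      have hbB := hb'.2
      have hfb : firstBlockSize π < b := lt_of_le_of_ne (fBS_le hbB) (Ne.symm hb'.1)
      -- take d = the largest breakpoint < b
      have hne : ((Bset π).filter (· < b)).Nonempty :=
        ⟨firstBlockSize π, Finset.mem_filter.2 ⟨fBS_mem π, hfb⟩⟩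
      set d := ((Bset π).filter (· < b)).max' hne with hddef
      have hdmem := Finset.max'_mem _ hne
      rw [Finset.mem_filter] at hdmem
      have hdb : d < b := hdmem.2
      have hdn : d < n := lt_of_lt_of_le hdb (mem_Bset.1 hbB).2.1
      refine ⟨d, Finset.mem_erase.2 ⟨by omega, hdmem.1⟩, ?_⟩
      have hle : nextB π d ≤ b := nextB_le hbB hdb
      obtain ⟨hm, hl⟩ := nextB_spec (π := π) hdn
      by_contra hne2
      have : nextB π d ∈ (Bset π).filter (· < b) :=
        Finset.mem_filter.2 ⟨hm, by omega⟩
      have := Finset.le_max' _ _ this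
      omega
    · intro d hd; rfl
  -- now compute
  have hcast : (↑(∑ d ∈ Bset π, firstBlockSize (rotp d π)) : ℤ) = (n : ℤ) := by
    rw [← hsplit]
    push_cast
    rw [rotp_n]
    have hterm : ∀ d ∈ (Bset π).erase n,
        (firstBlockSize (rotp d π) : ℤ) = (nextB π d : ℤ) - (d : ℤ) := by
      intro d hd
      have hd' := Finset.mem_erase.1 hd
      have hdn : d < n := lt_of_le_of_ne (mem_Bset.1 hd'.2).2.1 hd'.1
      obtain ⟨hm, hl⟩ := nextB_spec (π := π) hdn
      rw [fBS_rotp hd'.2 hdn]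
      omega
    rw [Finset.sum_congr rfl hterm, Finset.sum_sub_distrib, hbij]
    have h1 : ∑ b ∈ (Bset π).erase (firstBlockSize π), (b : ℤ) =
        (∑ b ∈ Bset π, (b : ℤ)) - (firstBlockSize π : ℤ) := by
      rw [← Finset.add_sum_erase (Bset π) (fun b => (b : ℤ)) (fBS_mem π)]
      ring
    have h2 : ∑ d ∈ (Bset π).erase n, (d : ℤ) =
        (∑ b ∈ Bset π, (b : ℤ)) - (n : ℤ) := by
      rw [← Finset.add_sum_erase (Bset π) (fun b => (b : ℤ)) hmem_n]
      ring
    rw [h1, h2]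
    ring
  exact_mod_cast hcast


lemma mem_Bset_rotp {π : Equiv.Perm (Fin n)} {d : ℕ} (hd : d ∈ Bset π) {e : ℕ} :
    e ∈ Bset (rotp d π) ↔ 1 ≤ e ∧ e ≤ n ∧ phi n d e ∈ Bset π := by
  obtain ⟨hd1, hdn, hpi⟩ := mem_Bset.1 hd
  constructor
  · intro he
    obtain ⟨he1, hen, hpie⟩ := mem_Bset.1 he
    refine ⟨he1, hen, mem_Bset.2 ⟨?_, ?_, (pi_rotp hd1 hdn hpi he1 hen).1 hpie⟩⟩
    · unfold phi; split_ifs <;> omega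
    · unfold phi; split_ifs <;> omega
  · rintro ⟨he1, hen, hb⟩
    exact mem_Bset.2 ⟨he1, hen, (pi_rotp hd1 hdn hpi he1 hen).2 (mem_Bset.1 hb).2.2⟩

lemma Bset_rotp_card {π : Equiv.Perm (Fin n)} {d : ℕ} (hd : d ∈ Bset π) :
    (Bset (rotp d π)).card = (Bset π).card := by
  obtain ⟨hd1, hdn, hpi⟩ := mem_Bset.1 hd
  refine Finset.card_bij' (fun e _ => phi n d e)
    (fun b _ => if d < b then b - d else b + n - d) ?_ ?_ ?_ ?_
  · intro e he
    exact ((mem_Bset_rotp hd).1 he).2.2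
  · intro b hb
    obtain ⟨hb1, hbn, _⟩ := mem_Bset.1 hb
    rw [mem_Bset_rotp hd]
    refine ⟨by split_ifs <;> omega, by split_ifs <;> omega, ?_⟩
    have : phi n d (if d < b then b - d else b + n - d) = b := by
      unfold phi; split_ifs <;> omega
    rw [this]; exact hb
  · intro e he
    obtain ⟨he1, hen, _⟩ := (mem_Bset_rotp hd).1 he
    unfold phi; split_ifs <;> omega
  · intro b hb
    obtain ⟨hb1, hbn, _⟩ := mem_Bset.1 hb
    unfold phi; split_ifs <;> omega

lemma psi_mem_Bset_rotp {π : Equiv.Perm (Fin n)} {d : ℕ} (hd : d ∈ Bset π) :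
    psi n d ∈ Bset (rotp d π) := by
  obtain ⟨hd1, hdn, _⟩ := mem_Bset.1 hd
  rw [mem_Bset_rotp hd]
  refine ⟨by unfold psi; split_ifs <;> omega, by unfold psi; split_ifs <;> omega, ?_⟩
  have : phi n d (psi n d) = n := by unfold phi psi; split_ifs <;> omega
  rw [this]; exact n_mem_Bset π

lemma rotp_psi_rotp {π : Equiv.Perm (Fin n)} {d : ℕ} (hd1 : 1 ≤ d) (hdn : d ≤ n) :
    rotp (psi n d) (rotp d π) = π := by
  rw [rotp_rotp]
  rcases eq_or_lt_of_le hdn with h | h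
  · have : psi n d + d = n + n := by unfold psi; split_ifs <;> omega
    rw [this, ← rotp_rotp, rotp_n, rotp_n]
  · have : psi n d + d = n := by unfold psi; split_ifs <;> omega
    rw [this, rotp_n]

lemma psi_psi {d : ℕ} (hd1 : 1 ≤ d) (hdn : d ≤ n) : psi n (psi n d) = d := by
  unfold psi; split_ifs <;> omega

theorem main (C : (n' : ℕ) → Set (Equiv.Perm (Fin n')))
    (hclass : IsPermClass C) (hsum : IsSumClosed C) (hfin : (C n).Finite) :
    (∑ π ∈ hfin.toFinset, (firstBlockSize π : ℚ)) =
      (n : ℚ) * ∑ π ∈ hfin.toFinset, (1 / (numBlocks π : ℚ)) := by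
  classical
  set F := hfin.toFinset with hF
  have hmemF : ∀ π : Equiv.Perm (Fin n), π ∈ F ↔ π ∈ C n := fun π => Set.Finite.mem_toFinset _
  have hclose : ∀ π ∈ F, ∀ d ∈ Bset π, rotp d π ∈ F := by
    intro π hπ d hd
    obtain ⟨hd1, hdn, hpi⟩ := mem_Bset.1 hd
    exact (hmemF _).2 (rotp_mem hclass hsum ((hmemF _).1 hπ) hd1 hdn hpi)
  have hcard0 : ∀ π : Equiv.Perm (Fin n), ((Bset π).card : ℚ) ≠ 0 := fun π =>
    Nat.cast_ne_zero.2 (Finset.card_pos.2 (Bset_nonempty π)).ne'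
  have stepA : ∑ π ∈ F, (firstBlockSize π : ℚ)
      = ∑ p ∈ F.sigma (fun π => Bset π),
          (firstBlockSize p.1 : ℚ) / ((Bset p.1).card : ℚ) := by
    rw [Finset.sum_sigma]
    refine Finset.sum_congr rfl fun π hπ => ?_
    dsimp only
    rw [Finset.sum_const, nsmul_eq_mul]
    exact ((mul_comm ((Bset π).card : ℚ) _).trans (div_mul_cancel₀ _ (hcard0 π))).symm
  have stepB : ∑ p ∈ F.sigma (fun π => Bset π),
        (firstBlockSize p.1 : ℚ) / ((Bset p.1).card : ℚ)
      = ∑ p ∈ F.sigma (fun π => Bset π),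
          (firstBlockSize (rotp p.2 p.1) : ℚ) / ((Bset p.1).card : ℚ) := by
    refine Finset.sum_bij'
      (fun p _ => (⟨rotp p.2 p.1, psi n p.2⟩ : Σ _ : Equiv.Perm (Fin n), ℕ))
      (fun p _ => (⟨rotp p.2 p.1, psi n p.2⟩ : Σ _ : Equiv.Perm (Fin n), ℕ))
      ?_ ?_ ?_ ?_ ?_
    · rintro ⟨π, d⟩ hp
      rw [Finset.mem_sigma] at hp ⊢
      exact ⟨hclose π hp.1 d hp.2, psi_mem_Bset_rotp hp.2⟩
    · rintro ⟨π, d⟩ hp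
      rw [Finset.mem_sigma] at hp ⊢
      exact ⟨hclose π hp.1 d hp.2, psi_mem_Bset_rotp hp.2⟩
    · rintro ⟨π, d⟩ hp
      rw [Finset.mem_sigma] at hp
      obtain ⟨hd1, hdn, _⟩ := mem_Bset.1 hp.2
      exact Sigma.ext (rotp_psi_rotp hd1 hdn) (heq_of_eq (psi_psi hd1 hdn))
    · rintro ⟨π, d⟩ hp
      rw [Finset.mem_sigma] at hp
      obtain ⟨hd1, hdn, _⟩ := mem_Bset.1 hp.2
      exact Sigma.ext (rotp_psi_rotp hd1 hdn) (heq_of_eq (psi_psi hd1 hdn))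
    · rintro ⟨π, d⟩ hp
      rw [Finset.mem_sigma] at hp
      obtain ⟨hd1, hdn, _⟩ := mem_Bset.1 hp.2
      dsimp only
      rw [rotp_psi_rotp hd1 hdn, Bset_rotp_card hp.2]
  have stepC : ∑ p ∈ F.sigma (fun π => Bset π),
        (firstBlockSize (rotp p.2 p.1) : ℚ) / ((Bset p.1).card : ℚ)
      = ∑ π ∈ F, (n : ℚ) / ((Bset π).card : ℚ) := by
    rw [Finset.sum_sigma]
    refine Finset.sum_congr rfl fun π hπ => ?_
    dsimp only
    rw [← Finset.sum_div]
    congr 1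
    rw [← Nat.cast_sum, gap_sum π]
  rw [stepA, stepB, stepC, Finset.mul_sum]
  refine Finset.sum_congr rfl fun π hπ => ?_
  rw [numBlocks_eq π]
  rw [div_eq_mul_one_div]


end Stmt6

/-- `∑_{π ∈ Cₙ} a(π) = n·∑_{π ∈ Cₙ} 1/χ(π)` in `ℚ`. -/



theorem stmt6 (C : (n : ℕ) → Set (Equiv.Perm (Fin n)))
    (hclass : IsPermClass C) (hsum : IsSumClosed C) (n : ℕ) (hn : 1 ≤ n) :
    (∑ π ∈ (Set.toFinite (C n)).toFinset, (firstBlockSize π : ℚ)) =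
      (n : ℚ) * ∑ π ∈ (Set.toFinite (C n)).toFinset, (1 / (numBlocks π : ℚ)) := by
  haveI : NeZero n := ⟨by omega⟩
  exact Stmt6.main C hclass hsum (Set.toFinite (C n))
end

section
/- An affine permutation is decomposable if and only if it avoids the infinite increasing oscillation 𝒪. -/
namespace Stmt8Aux

def IsCutAt (ω : ℤ → ℤ) (c : ℤ) : Prop := ∀ i : ℤ, i ≤ c ↔ ω i ≤ c

lemma oscill_odd {i : ℤ} (h : Odd i) : oscillO i = i + 2 := if_pos h

lemma oscill_even {i : ℤ} (h : Even i) : oscillO i = i - 2 :=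
  if_neg (Int.not_odd_iff_even.mpr h)

lemma sm_shift {φ : ℤ → ℤ} (hφ : StrictMono φ) {a b : ℤ} (hab : a ≤ b) :
    φ a + (b - a) ≤ φ b := by
  obtain ⟨d, hd⟩ := Int.le.dest hab
  subst hd
  have : ∀ d : ℕ, φ a + d ≤ φ (a + d) := by
    intro d
    induction d with
    | zero => simp
    | succ k ih =>
      have h1 : φ (a + k) < φ (a + k + 1) := hφ (by omega)
      push_cast
      push_cast at ih
      have : (a : ℤ) + (k + 1) = (a + k) + 1 := by ring
      rw [this]
      omega
  have := this d
  omega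

lemma finAux_pos {m : ℕ} (x : Fin m) {q : ℤ} (hq : 0 ≤ q) :
    1 ≤ ((x.val : ℤ)) + 1 + (m:ℤ) * q := by
  have h1 : (0:ℤ) ≤ (x.val : ℤ) := Int.natCast_nonneg _
  have h3 : (0:ℤ) ≤ (m:ℤ) * q := mul_nonneg (Int.natCast_nonneg _) hq
  omega

lemma finAux_nonpos {m : ℕ} (x : Fin m) {q : ℤ} (hq : q ≤ -1) :
    ((x.val : ℤ)) + 1 + (m:ℤ) * q ≤ 0 := by
  have h1 : (x.val : ℤ) ≤ (m:ℤ) - 1 := by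
    have := x.isLt
    omega
  have h3 : (m:ℤ) * q ≤ (m:ℤ) * (-1) := mul_le_mul_of_nonneg_left hq (Int.natCast_nonneg _)
  omega

lemma infSum_pos {m : ℕ} (hm : 0 < m) (π : Equiv.Perm (Fin m)) {i : ℤ} (hi : 1 ≤ i) :
    1 ≤ infiniteSum hm π i := by
  have hm' : (0:ℤ) < (m:ℤ) := by exact_mod_cast hm
  exact finAux_pos _ (Int.ediv_nonneg (by omega) (by omega))

lemma infSum_nonpos {m : ℕ} (hm : 0 < m) (π : Equiv.Perm (Fin m)) {i : ℤ} (hi : i ≤ 0) :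
    infiniteSum hm π i ≤ 0 := by
  have hm' : (0:ℤ) < (m:ℤ) := by exact_mod_cast hm
  refine finAux_nonpos _ ?_
  have := Int.ediv_neg_of_neg_of_pos (show i - 1 < 0 by omega) hm'
  omega

lemma decomp_cut {ω : ℤ → ℤ} (h : IsDecomposableAffine ω) : ∃ c, IsCutAt ω c := by
  obtain ⟨r, m, hm, π, rfl⟩ := h
  refine ⟨r, fun i => ?_⟩
  unfold shiftPerm
  constructor
  · intro hi
    have := infSum_nonpos hm π (i := i - r) (by omega)
    omega
  · intro hi
    by_contra hc
    have := infSum_pos hm π (i := i - r) (by omega)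
    omega

lemma cut_not_contains {ω : ℤ → ℤ} {c : ℤ} (hcut : IsCutAt ω c) :
    ¬ ContainsAffine ω oscillO := by
  rintro ⟨φ, φ', hφ, hφ', heq⟩
  -- greatest k with φ k ≤ c
  obtain ⟨k, hk, hkmax⟩ := Int.exists_greatest_of_bdd
    (P := fun k => φ k ≤ c)
    (by
      refine ⟨max 0 (c - φ 0), fun z hz => ?_⟩
      by_contra hzb
      push_neg at hzb
      have hz0 : 0 ≤ z := le_trans (le_max_left _ _) hzb.le
      have := sm_shift hφ (a := 0) (b := z) hz0
      have : z ≤ c - φ 0 := by omega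
      have := le_max_right 0 (c - φ 0)
      omega)
    (by
      refine ⟨min 0 (c - φ 0), ?_⟩
      rcases le_or_gt (φ 0) c with h | h
      · have h1 : min 0 (c - φ 0) ≤ 0 := min_le_left _ _
        have := sm_shift hφ (a := min 0 (c - φ 0)) (b := 0) h1
        omega
      · have h1 : min 0 (c - φ 0) = c - φ 0 := min_eq_right (by omega)
        have h2 : min 0 (c - φ 0) ≤ 0 := min_le_left _ _
        have := sm_shift hφ (a := min 0 (c - φ 0)) (b := 0) h2
        omega)
  have hk1 : c < φ (k + 1) := by
    by_contra hc1
    push_neg at hc1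
    have := hkmax (k+1) hc1
    omega
  rcases Int.even_or_odd k with hkpar | hkpar
  · -- k even : use positions k-1 (odd) and k+2 (even)
    have ho : Odd (k - 1) := by
      obtain ⟨t, ht⟩ := hkpar
      exact ⟨t - 1, by omega⟩
    have he : Even (k + 2) := by
      obtain ⟨t, ht⟩ := hkpar
      exact ⟨t + 1, by omega⟩
    have e1 : ω (φ (k - 1)) = φ' (k + 1) := by
      have := heq (k - 1)
      rwa [oscill_odd ho, show k - 1 + 2 = k + 1 by ring] at this
    have e2 : ω (φ (k + 2)) = φ' k := by
      have := heq (k + 2)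
      rwa [oscill_even he, show k + 2 - 2 = k by ring] at this
    have hv : φ' k < φ' (k + 1) := hφ' (by omega)
    have hp1 : φ (k - 1) ≤ c := le_trans (hφ (by omega : (k:ℤ) - 1 < k)).le hk
    have hp2 : c < φ (k + 2) := lt_trans hk1 (hφ (by omega))
    have c1 : ω (φ (k - 1)) ≤ c := (hcut _).mp hp1
    have c2 : ¬ (ω (φ (k + 2)) ≤ c) := by
      intro hcon
      have := (hcut (φ (k + 2))).mpr hcon
      omega
    omega
  · -- k odd : positions k and k+1
    have he : Even (k + 1) := by
      obtain ⟨t, ht⟩ := hkpar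
      exact ⟨t + 1, by omega⟩
    have e1 : ω (φ k) = φ' (k + 2) := by
      have := heq k
      rwa [oscill_odd hkpar] at this
    have e2 : ω (φ (k + 1)) = φ' (k - 1) := by
      have := heq (k + 1)
      rwa [oscill_even he, show k + 1 - 2 = k - 1 by ring] at this
    have hv : φ' (k - 1) < φ' (k + 2) := hφ' (by omega)
    have c1 : ω (φ k) ≤ c := (hcut _).mp hk
    have c2 : ¬ (ω (φ (k + 1)) ≤ c) := by
      intro hcon
      have := (hcut (φ (k + 1))).mpr hcon
      omega
    omega

end Stmt8Aux
namespace Stmt8Aux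

open Finset

lemma Ioc_top {a b : ℤ} (h : a ≤ b) (f : ℤ → ℤ) :
    ∑ i ∈ Finset.Ioc a (b+1), f i = (∑ i ∈ Finset.Ioc a b, f i) + f (b+1) := by
  have he : Finset.Ioc a (b+1) = insert (b+1) (Finset.Ioc a b) := by
    ext x
    simp only [Finset.mem_Ioc, Finset.mem_insert]
    omega
  rw [he, Finset.sum_insert (by simp [Finset.mem_Ioc])]
  ring

lemma Ioc_bot {a b : ℤ} (h : a ≤ b) (f : ℤ → ℤ) :
    ∑ i ∈ Finset.Ioc (a-1) b, f i = f a + (∑ i ∈ Finset.Ioc a b, f i) := by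
  have he : Finset.Ioc (a-1) b = insert a (Finset.Ioc a b) := by
    ext x
    simp only [Finset.mem_Ioc, Finset.mem_insert]
    omega
  rw [he, Finset.sum_insert (by simp [Finset.mem_Ioc])]

lemma Ioc_split {a b c : ℤ} (hab : a ≤ b) (hbc : b ≤ c) (f : ℤ → ℤ) :
    ∑ i ∈ Finset.Ioc a c, f i
      = (∑ i ∈ Finset.Ioc a b, f i) + (∑ i ∈ Finset.Ioc b c, f i) := by
  rw [← Finset.sum_union]
  · rw [Finset.Ioc_union_Ioc_eq_Ioc hab hbc]
  · rw [Finset.disjoint_left]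
    intro x hx hx'
    simp only [Finset.mem_Ioc] at hx hx'
    omega

section Sums

variable {ω : ℤ → ℤ} {N : ℤ}

lemma per_shift (hper : ∀ i, ω (i + N) = ω i + N) :
    ∀ (k : ℤ) (i : ℤ), ω (i + N * k) = ω i + N * k := by
  intro k
  induction k using Int.induction_on with
  | zero => simp
  | succ m ih =>
    intro i
    have h1 : i + N * ((m : ℤ) + 1) = (i + N * m) + N := by ring
    rw [h1, hper, ih]
    ring
  | pred m ih =>
    intro i
    have h1 : i + N * (-(m : ℤ) - 1) = (i + N * (-(m:ℤ))) - N := by ring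
    have h2 : ω ((i + N * (-(m:ℤ)) - N) + N) = ω (i + N * (-(m:ℤ)) - N) + N := hper _
    rw [show (i + N * (-(m:ℤ)) - N) + N = i + N * (-(m:ℤ)) by ring] at h2
    rw [h1, show N * (-(m:ℤ) - 1) = N * (-(m:ℤ)) - N by ring]
    have := ih i
    omega

lemma window1 (hN : 1 ≤ N) (hper : ∀ i, ω (i + N) = ω i + N)
    (hsum : ∑ i ∈ Finset.Ioc 0 N, ω i = ∑ i ∈ Finset.Ioc 0 N, i) :
    ∀ a : ℤ, ∑ i ∈ Finset.Ioc a (a + N), ω i = ∑ i ∈ Finset.Ioc a (a + N), i := by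
  have key : ∀ a : ℤ,
      (∑ i ∈ Finset.Ioc a (a + N), ω i = ∑ i ∈ Finset.Ioc a (a + N), i) ↔
      (∑ i ∈ Finset.Ioc (a+1) (a + 1 + N), ω i = ∑ i ∈ Finset.Ioc (a+1) (a+1+N), i) := by
    intro a
    have h1 : ∀ f : ℤ → ℤ, ∑ i ∈ Finset.Ioc a (a + N), f i
        = f (a+1) + ∑ i ∈ Finset.Ioc (a+1) (a+N), f i := by
      intro f
      have := Ioc_bot (a := a+1) (b := a + N) (by omega) f
      simpa using this
    have h2 : ∀ f : ℤ → ℤ, ∑ i ∈ Finset.Ioc (a+1) (a+1+N), f i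
        = (∑ i ∈ Finset.Ioc (a+1) (a+N), f i) + f (a+N+1) := by
      intro f
      have := Ioc_top (a := a+1) (b := a + N) (by omega) f
      rw [show a + 1 + N = a + N + 1 by ring]
      exact this
    have hω : ω (a + N + 1) = ω (a+1) + N := by
      have := hper (a+1)
      rw [show a + 1 + N = a + N + 1 by ring] at this
      exact this
    have e1 := h1 ω
    have e2 := h2 ω
    have e3 := h1 (fun x : ℤ => x)
    have e4 := h2 (fun x : ℤ => x)
    rw [e1, e2, e3, e4]
    omega
  intro a
  induction a using Int.induction_on with
  | zero => simpa using hsum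
  | succ m ih => exact (key m).mp ih
  | pred m ih =>
    have := (key (-(m:ℤ) - 1)).mpr
    simp only [show -(m:ℤ) - 1 + 1 = -(m:ℤ) by ring] at this
    exact this ih

lemma windowT (hN : 1 ≤ N) (hper : ∀ i, ω (i + N) = ω i + N)
    (hsum : ∑ i ∈ Finset.Ioc 0 N, ω i = ∑ i ∈ Finset.Ioc 0 N, i) :
    ∀ (t : ℕ) (a : ℤ), ∑ i ∈ Finset.Ioc a (a + N * t), ω i = ∑ i ∈ Finset.Ioc a (a + N * t), i := by
  intro t
  induction t with
  | zero => simp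
  | succ m ih =>
    intro a
    have hcast : a + N * ((m+1 : ℕ) : ℤ) = a + N * m + N := by push_cast; ring
    have h1 : a ≤ a + N * m := by
      have : (0:ℤ) ≤ N * m := mul_nonneg (by omega) (Int.natCast_nonneg _)
      omega
    have h2 : a + N * m ≤ a + N * m + N := by omega
    have hsplit : ∀ f : ℤ → ℤ, ∑ i ∈ Finset.Ioc a (a + N * ((m+1:ℕ):ℤ)), f i
        = (∑ i ∈ Finset.Ioc a (a + N * m), f i)
          + ∑ i ∈ Finset.Ioc (a + N * m) (a + N * m + N), f i := by
      intro f
      rw [hcast]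
      exact Ioc_split h1 h2 f
    have e1 := hsplit ω
    have e2 := hsplit (fun x : ℤ => x)
    rw [e1, e2, ih a, window1 hN hper hsum (a + N * m)]

lemma sum_le_Ioc : ∀ (m : ℕ) (s : Finset ℤ) (c : ℤ), s.card = m → (∀ x ∈ s, x ≤ c) →
    ∑ x ∈ s, x ≤ ∑ x ∈ Finset.Ioc (c - m) c, x := by
  intro m
  induction m with
  | zero =>
    intro s c hc _
    rw [Finset.card_eq_zero.mp hc]
    simp
  | succ m ih =>
    intro s c hc hb
    have hne : s.Nonempty := Finset.card_pos.mp (by omega)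
    set M := s.max' hne with hM
    have hMs : M ∈ s := s.max'_mem hne
    have hMc : M ≤ c := hb M hMs
    have hcard : (s.erase M).card = m := by
      rw [Finset.card_erase_of_mem hMs, hc]
      omega
    have hbd : ∀ x ∈ s.erase M, x ≤ c - 1 := by
      intro x hx
      have h1 : x ≤ M := Finset.le_max' s x (Finset.mem_of_mem_erase hx)
      have h2 : x ≠ M := Finset.ne_of_mem_erase hx
      omega
    have hih := ih (s.erase M) (c-1) hcard hbd
    have hsum : ∑ x ∈ s, x = M + ∑ x ∈ s.erase M, x :=
      (Finset.add_sum_erase s id hMs).symm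
    have hR : ∑ x ∈ Finset.Ioc (c - ((m+1:ℕ):ℤ)) c, x
        = (∑ x ∈ Finset.Ioc (c - 1 - m) (c-1), x) + c := by
      have h3 := Ioc_top (a := c - 1 - (m:ℤ)) (b := c - 1) (by omega) (fun x : ℤ => x)
      rw [show c - 1 + 1 = c by ring] at h3
      rw [show c - ((m+1:ℕ):ℤ) = c - 1 - (m:ℤ) by push_cast; ring]
      exact h3
    omega

lemma sum_ge_Ioc : ∀ (m : ℕ) (s : Finset ℤ) (c : ℤ), s.card = m → (∀ x ∈ s, c < x) →
    ∑ x ∈ Finset.Ioc c (c + m), x ≤ ∑ x ∈ s, x := by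
  intro m
  induction m with
  | zero =>
    intro s c hc _
    rw [Finset.card_eq_zero.mp hc]
    simp
  | succ m ih =>
    intro s c hc hb
    have hne : s.Nonempty := Finset.card_pos.mp (by omega)
    set M := s.min' hne with hM
    have hMs : M ∈ s := s.min'_mem hne
    have hMc : c < M := hb M hMs
    have hcard : (s.erase M).card = m := by
      rw [Finset.card_erase_of_mem hMs, hc]
      omega
    have hbd : ∀ x ∈ s.erase M, c + 1 < x := by
      intro x hx
      have h1 : M ≤ x := Finset.min'_le s x (Finset.mem_of_mem_erase hx)
      have h2 : x ≠ M := Finset.ne_of_mem_erase hx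
      omega
    have hih := ih (s.erase M) (c+1) hcard hbd
    have hsum : ∑ x ∈ s, x = M + ∑ x ∈ s.erase M, x :=
      (Finset.add_sum_erase s id hMs).symm
    have hL : ∑ x ∈ Finset.Ioc c (c + ((m+1:ℕ):ℤ)), x
        = (c+1) + ∑ x ∈ Finset.Ioc (c+1) (c + 1 + m), x := by
      have h3 := Ioc_bot (a := c+1) (b := c + 1 + (m:ℤ)) (by omega) (fun x : ℤ => x)
      rw [show c + 1 - 1 = c by ring] at h3
      rw [show c + ((m+1:ℕ):ℤ) = c + 1 + (m:ℤ) by push_cast; ring]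
      exact h3
    omega

end Sums

end Stmt8Aux
namespace Stmt8Aux

open Finset

section DE

variable {ω : ℤ → ℤ} {N B : ℤ}

lemma K_facts (hN : 1 ≤ N) (hB : 0 ≤ B) :
    1 ≤ N * (B + 1) ∧ B ≤ N * (B + 1) := by
  constructor
  · have := mul_le_mul hN (le_refl (B+1)) (by omega) (by omega)
    omega
  · have := mul_le_mul hN (le_refl (B+1)) (by omega) (by omega)
    omega

lemma de_forward (hN : 1 ≤ N) (hinj : Function.Injective ω)
    (hper : ∀ i, ω (i + N) = ω i + N)
    (hsum : ∑ i ∈ Finset.Ioc 0 N, ω i = ∑ i ∈ Finset.Ioc 0 N, i)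
    (hB : 0 ≤ B) (hBl : ∀ i, i - B ≤ ω i)
    {c : ℤ} (H1 : ∀ i, i ≤ c → ω i ≤ c) : ∀ j, c < j → c < ω j := by
  by_contra hcon
  push_neg at hcon
  obtain ⟨j₀, hj₀, hv₀⟩ := hcon
  set K := N * (B + 1) with hK
  have hK1 : 1 ≤ K := by rw [hK]; exact (K_facts hN hB).1
  have hKB : B ≤ K := by rw [hK]; exact (K_facts hN hB).2
  set t := (B + 1).toNat with ht
  have htK : (t : ℤ) = B + 1 := Int.toNat_of_nonneg (by omega)
  set W := Finset.Ioc (c - K) c with hW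
  have hWsum : ∑ i ∈ W, ω i = ∑ i ∈ W, i := by
    have h := windowT hN hper hsum t (c - K)
    rw [show c - K + N * (t:ℤ) = c by rw [htK]; omega] at h
    exact h
  have hWcard : W.card = K.toNat := by
    rw [hW, Int.card_Ioc]
    congr 1
    omega
  have himg : (W.image ω).card = K.toNat := by
    rw [Finset.card_image_of_injective W hinj, hWcard]
  have hnm : ω j₀ ∉ W.image ω := by
    intro hmem
    obtain ⟨i, hiW, hωi⟩ := Finset.mem_image.mp hmem
    have : i = j₀ := hinj hωi
    subst this
    rw [hW, Finset.mem_Ioc] at hiW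
    omega
  set s' := insert (ω j₀) (W.image ω) with hs'
  have hcard' : s'.card = K.toNat + 1 := by
    rw [hs', Finset.card_insert_of_notMem hnm, himg]
  have hbound : ∀ x ∈ s', x ≤ c := by
    intro x hx
    rw [hs', Finset.mem_insert] at hx
    rcases hx with rfl | hx
    · exact hv₀
    · obtain ⟨i, hiW, rfl⟩ := Finset.mem_image.mp hx
      rw [hW, Finset.mem_Ioc] at hiW
      exact H1 i hiW.2
  have happ := sum_le_Ioc (K.toNat + 1) s' c hcard' hbound
  have hcast : ((K.toNat + 1 : ℕ) : ℤ) = K + 1 := by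
    push_cast
    rw [Int.toNat_of_nonneg (by omega)]
  rw [hcast] at happ
  have hins : ∑ x ∈ s', x = ω j₀ + ∑ x ∈ W.image ω, x := by
    rw [hs', Finset.sum_insert hnm]
  have himgsum : ∑ x ∈ W.image ω, x = ∑ i ∈ W, ω i :=
    Finset.sum_image (fun x _ y _ h => hinj h)
  have hRHS : ∑ x ∈ Finset.Ioc (c - (K+1)) c, x
      = (c - K) + ∑ x ∈ Finset.Ioc (c - K) c, x := by
    have h3 := Ioc_bot (a := c - K) (b := c) (by omega) (fun x : ℤ => x)
    rw [show c - (K+1) = c - K - 1 by ring]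
    exact h3
  have hlow := hBl j₀
  rw [hins, himgsum, hWsum] at happ
  rw [← hW] at hRHS
  rw [hRHS] at happ
  have h1 : ω j₀ ≤ c - K := by omega
  omega

lemma de_backward (hN : 1 ≤ N) (hinj : Function.Injective ω)
    (hper : ∀ i, ω (i + N) = ω i + N)
    (hsum : ∑ i ∈ Finset.Ioc 0 N, ω i = ∑ i ∈ Finset.Ioc 0 N, i)
    (hB : 0 ≤ B) (hBu : ∀ i, ω i ≤ i + B)
    {c : ℤ} (H2 : ∀ j, c < j → c < ω j) : ∀ i, i ≤ c → ω i ≤ c := by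
  by_contra hcon
  push_neg at hcon
  obtain ⟨i₀, hi₀, hv₀⟩ := hcon
  set K := N * (B + 1) with hK
  have hK1 : 1 ≤ K := by rw [hK]; exact (K_facts hN hB).1
  have hKB : B ≤ K := by rw [hK]; exact (K_facts hN hB).2
  set t := (B + 1).toNat with ht
  have htK : (t : ℤ) = B + 1 := Int.toNat_of_nonneg (by omega)
  set W := Finset.Ioc c (c + K) with hW
  have hWsum : ∑ i ∈ W, ω i = ∑ i ∈ W, i := by
    have h := windowT hN hper hsum t c
    rw [show c + N * (t:ℤ) = c + K by rw [htK]; try omega] at h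
    exact h
  have hWcard : W.card = K.toNat := by
    rw [hW, Int.card_Ioc]
    congr 1
    omega
  have himg : (W.image ω).card = K.toNat := by
    rw [Finset.card_image_of_injective W hinj, hWcard]
  have hnm : ω i₀ ∉ W.image ω := by
    intro hmem
    obtain ⟨i, hiW, hωi⟩ := Finset.mem_image.mp hmem
    have : i = i₀ := hinj hωi
    subst this
    rw [hW, Finset.mem_Ioc] at hiW
    omega
  set s' := insert (ω i₀) (W.image ω) with hs'
  have hcard' : s'.card = K.toNat + 1 := by
    rw [hs', Finset.card_insert_of_notMem hnm, himg]
  have hbound : ∀ x ∈ s', c < x := by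
    intro x hx
    rw [hs', Finset.mem_insert] at hx
    rcases hx with rfl | hx
    · exact hv₀
    · obtain ⟨i, hiW, rfl⟩ := Finset.mem_image.mp hx
      rw [hW, Finset.mem_Ioc] at hiW
      exact H2 i hiW.1
  have happ := sum_ge_Ioc (K.toNat + 1) s' c hcard' hbound
  have hcast : ((K.toNat + 1 : ℕ) : ℤ) = K + 1 := by
    push_cast
    rw [Int.toNat_of_nonneg (by omega)]
  rw [hcast] at happ
  have hins : ∑ x ∈ s', x = ω i₀ + ∑ x ∈ W.image ω, x := by
    rw [hs', Finset.sum_insert hnm]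
  have himgsum : ∑ x ∈ W.image ω, x = ∑ i ∈ W, ω i :=
    Finset.sum_image (fun x _ y _ h => hinj h)
  have hLHS : ∑ x ∈ Finset.Ioc c (c + (K+1)), x
      = (∑ x ∈ Finset.Ioc c (c + K), x) + (c + K + 1) := by
    have h3 := Ioc_top (a := c) (b := c + K) (by omega) (fun x : ℤ => x)
    rw [show c + (K+1) = c + K + 1 by ring]
    exact h3
  have hup := hBu i₀
  rw [hins, himgsum, hWsum] at happ
  rw [← hW] at hLHS
  rw [hLHS] at happ
  have h1 : c + K + 1 ≤ ω i₀ := by omega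
  omega

lemma noCut_both (hN : 1 ≤ N) (hinj : Function.Injective ω)
    (hper : ∀ i, ω (i + N) = ω i + N)
    (hsum : ∑ i ∈ Finset.Ioc 0 N, ω i = ∑ i ∈ Finset.Ioc 0 N, i)
    (hB : 0 ≤ B) (hBl : ∀ i, i - B ≤ ω i) (hBu : ∀ i, ω i ≤ i + B)
    {c : ℤ} (hnc : ¬ IsCutAt ω c) :
    (∃ i, i ≤ c ∧ c < ω i) ∧ (∃ j, c < j ∧ ω j ≤ c) := by
  have hsplit : ¬ (∀ i, i ≤ c → ω i ≤ c) ∨ ¬ (∀ j, c < j → c < ω j) := by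
    by_contra hcon
    push_neg at hcon
    obtain ⟨hA, hBB⟩ := hcon
    apply hnc
    intro i
    constructor
    · exact hA i
    · intro hωi
      by_contra hic
      push_neg at hic
      have := hBB i hic
      omega
  rcases hsplit with hA | hBB
  · push_neg at hA
    obtain ⟨i, hi, hωi⟩ := hA
    refine ⟨⟨i, hi, hωi⟩, ?_⟩
    by_contra hcon
    push_neg at hcon
    have H2 : ∀ j, c < j → c < ω j := by
      intro j hj
      have := hcon j hj
      omega
    have := de_backward hN hinj hper hsum hB hBu H2 i hi
    omega
  · push_neg at hBB
    obtain ⟨j, hj, hωj⟩ := hBB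
    refine ⟨?_, ⟨j, hj, by omega⟩⟩
    by_contra hcon
    push_neg at hcon
    have H1 : ∀ i, i ≤ c → ω i ≤ c := by
      intro i hi
      have := hcon i hi
      omega
    have := de_forward hN hinj hper hsum hB hBl H1 j hj
    omega

end DE

end Stmt8Aux
namespace Stmt8Aux

section Core

variable {ω : ℤ → ℤ} {N B : ℤ}

theorem contains_of_DE (hN : 1 ≤ N) (hinj : Function.Injective ω)
    (hper : ∀ i, ω (i + N) = ω i + N) (hB : 0 ≤ B)
    (hBl : ∀ i, i - B ≤ ω i) (hBu : ∀ i, ω i ≤ i + B)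
    (hD : ∀ c : ℤ, ∃ i, i ≤ c ∧ c < ω i)
    (hE : ∀ c : ℤ, ∃ j, c < j ∧ ω j ≤ c) :
    ContainsAffine ω oscillO := by
  -- the "record before c" function f
  have hmax : ∀ c : ℤ, ∃ i, i ≤ c ∧ c < ω i ∧ ∀ i', i' ≤ c → ω i' ≤ ω i := by
    intro c
    obtain ⟨v, ⟨i, hi, hiv⟩, hvmax⟩ := Int.exists_greatest_of_bdd
      (P := fun v => ∃ i, i ≤ c ∧ ω i = v)
      (by
        refine ⟨c + B, fun v hv => ?_⟩
        obtain ⟨i, hi, rfl⟩ := hv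
        have := hBu i
        omega)
      ⟨ω c, c, le_refl c, rfl⟩
    refine ⟨i, hi, ?_, ?_⟩
    · obtain ⟨i', hi', hci'⟩ := hD c
      have := hvmax (ω i') ⟨i', hi', rfl⟩
      omega
    · intro i' hi'
      have := hvmax (ω i') ⟨i', hi', rfl⟩
      omega
  choose f hf1 hf2 hf3 using hmax
  -- the "first minimum after c" function jp
  have hmin : ∀ c : ℤ, ∃ j, c < j ∧ ω j ≤ c ∧ ∀ z, c < z → ω j ≤ ω z := by
    intro c
    obtain ⟨v, ⟨j, hj, hjv⟩, hvmin⟩ := Int.exists_least_of_bdd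
      (P := fun v => ∃ j, c < j ∧ ω j = v)
      (by
        refine ⟨c - B, fun v hv => ?_⟩
        obtain ⟨j, hj, rfl⟩ := hv
        have := hBl j
        omega)
      ⟨ω (c+1), c + 1, by omega, rfl⟩
    refine ⟨j, hj, ?_, ?_⟩
    · obtain ⟨j', hj', hcj'⟩ := hE c
      have := hvmin (ω j') ⟨j', hj', rfl⟩
      omega
    · intro z hz
      have := hvmin (ω z) ⟨z, hz, rfl⟩
      omega
  choose jp hj1 hj2 hj3 using hmin
  -- the set S of "minimal from the right" positions
  set S : Set ℤ := {s | ∀ z, s < z → ω s < ω z} with hS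
  have hjpS : ∀ c, jp c ∈ S := by
    intro c z hz
    have h1 : ω (jp c) ≤ ω z := hj3 c z (lt_trans (hj1 c) hz)
    have h2 : ω (jp c) ≠ ω z := fun h => (by omega : jp c ≠ z) (hinj h)
    omega
  have hSnR : ∀ s ∈ S, ∃ i, i < s ∧ ω s < ω i := by
    intro s hs
    by_contra hcon
    push_neg at hcon
    obtain ⟨i, hi, hωi⟩ := hD s
    obtain ⟨j, hj, hωj⟩ := hE s
    have h1 : ω s < ω j := hs j hj
    rcases lt_or_eq_of_le hi with h | h
    · have := hcon i h
      omega
    · subst h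
      omega
  have hUs : ∀ s ∈ S, ω s < ω (f (s - 1)) := by
    intro s hs
    obtain ⟨i, hi, hωi⟩ := hSnR s hs
    have := hf3 (s-1) i (by omega)
    omega
  -- the function g : greatest element of S with value < v
  have hgex : ∀ v : ℤ, ∃ s, s ∈ S ∧ ω s < v ∧ ∀ t, t ∈ S → ω t < v → t ≤ s := by
    intro v
    obtain ⟨s, ⟨hsS, hsv⟩, hsmax⟩ := Int.exists_greatest_of_bdd
      (P := fun s => s ∈ S ∧ ω s < v)
      (by
        refine ⟨v + B, fun s hs => ?_⟩
        have := hBl s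
        omega)
      ⟨jp (v-1), hjpS (v-1), by have := hj2 (v-1); omega⟩
    exact ⟨s, hsS, hsv, fun t htS htv => hsmax t ⟨htS, htv⟩⟩
  choose g hg1 hg2 hg3 using hgex
  set σ : ℤ → ℤ := fun s => g (ω (f (s - 1))) with hσ
  -- basic properties of σ
  have hσS : ∀ s, σ s ∈ S := fun s => hg1 _
  have hσval : ∀ s, ω (σ s) < ω (f (s - 1)) := fun s => hg2 _
  have hσgt : ∀ s, s < σ s := by
    intro s
    have h1 : ω (jp s) ≤ s := hj2 s
    have h2 : s - 1 < ω (f (s-1)) := hf2 (s-1)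
    have h3 : ω (jp s) ≠ ω (f (s-1)) := by
      intro h
      have := hinj h
      have h4 := hj1 s
      have h5 := hf1 (s-1)
      omega
    have h6 : jp s ≤ σ s := hg3 _ (jp s) (hjpS s) (by omega)
    have := hj1 s
    omega
  have hσbeyond : ∀ s z, σ s < z → ω (f (s - 1)) < ω z := by
    intro s z hz
    have h1 : ¬ (ω z < ω (f (s-1))) := by
      intro hcon
      have h2 : ω (jp (σ s)) ≤ ω z := hj3 (σ s) z hz
      have h3 : jp (σ s) ≤ σ s := hg3 _ (jp (σ s)) (hjpS (σ s)) (by omega)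
      have := hj1 (σ s)
      omega
    have h2 : ω z ≠ ω (f (s-1)) := by
      intro h
      have h3 := hinj h
      have h4 := hf1 (s-1)
      have h5 := hσgt s
      omega
    omega
  have hC3 : ∀ s, ω (f (s - 1)) < ω (σ (σ s)) := by
    intro s
    exact hσbeyond s (σ (σ s)) (hσgt (σ s))
  have hC4 : ∀ s ∈ S, s < f (σ s - 1) := by
    intro s hs
    have h1 : ω (σ (σ s)) < ω (f (σ s - 1)) := hσval (σ s)
    have h2 : ω (f (s - 1)) < ω (σ (σ s)) := hC3 s
    have h3 : ¬ (f (σ s - 1) ≤ s - 1) := by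
      intro hcon
      have := hf3 (s-1) (f (σ s - 1)) hcon
      omega
    have h4 : f (σ s - 1) ≠ s := by
      intro h
      have h5 := hUs s hs
      rw [h] at h1
      omega
    omega
  -- equivariance under shifts by multiples of N
  have perM : ∀ M : ℤ, N ∣ M → ∀ x, ω (x + M) = ω x + M := by
    intro M hM x
    obtain ⟨k, rfl⟩ := hM
    exact per_shift hper k x
  have hfval : ∀ M : ℤ, N ∣ M → ∀ s, ω (f (s + M - 1)) = ω (f (s - 1)) + M := by
    intro M hM s
    have d1 : ω (f (s-1)) + M ≤ ω (f (s + M - 1)) := by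
      have h1 : f (s-1) + M ≤ s + M - 1 := by have := hf1 (s-1); omega
      have h2 := hf3 (s + M - 1) (f (s-1) + M) h1
      rw [perM M hM (f (s-1))] at h2
      exact h2
    have d2 : ω (f (s + M - 1)) ≤ ω (f (s-1)) + M := by
      have h1 : f (s + M - 1) - M ≤ s - 1 := by have := hf1 (s + M - 1); omega
      have h2 := hf3 (s-1) (f (s + M - 1) - M) h1
      have h3 : ω (f (s + M - 1) - M + M) = ω (f (s + M - 1) - M) + M := perM M hM _
      rw [show f (s + M - 1) - M + M = f (s + M - 1) by ring] at h3
      omega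
    omega
  have hSshift : ∀ M : ℤ, N ∣ M → ∀ s, s ∈ S → s + M ∈ S := by
    intro M hM s hs z hz
    have h1 : ω (z - M + M) = ω (z - M) + M := perM M hM _
    rw [show z - M + M = z by ring] at h1
    have h2 : ω s < ω (z - M) := hs (z - M) (by omega)
    have h3 : ω (s + M) = ω s + M := perM M hM s
    omega
  have hgshift : ∀ M : ℤ, N ∣ M → ∀ v, g (v + M) = g v + M := by
    intro M hM v
    have d1 : g v + M ≤ g (v + M) := by
      refine hg3 (v + M) (g v + M) (hSshift M hM _ (hg1 v)) ?_
      rw [perM M hM (g v)]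
      have := hg2 v
      omega
    have d2 : g (v + M) ≤ g v + M := by
      have h1 : g (v + M) - M ∈ S := by
        have := hSshift (-M) (dvd_neg.mpr hM) (g (v+M)) (hg1 (v+M))
        rwa [show g (v+M) + -M = g (v+M) - M by ring] at this
      have h2 : ω (g (v + M) - M) < v := by
        have h3 : ω (g (v+M) - M + M) = ω (g (v+M) - M) + M := perM M hM _
        rw [show g (v+M) - M + M = g (v+M) by ring] at h3
        have := hg2 (v + M)
        omega
      have := hg3 v (g (v+M) - M) h1 h2
      omega
    omega
  have hσshift : ∀ M : ℤ, N ∣ M → ∀ s, σ (s + M) = σ s + M := by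
    intro M hM s
    show g (ω (f (s + M - 1))) = g (ω (f (s - 1))) + M
    rw [hfval M hM s, hgshift M hM]
  -- iterates and pigeonhole
  set t : ℕ → ℤ := fun k => σ^[k] (jp 0) with ht
  have htsucc : ∀ k, t (k+1) = σ (t k) := by
    intro k
    show σ^[k+1] (jp 0) = σ (σ^[k] (jp 0))
    rw [Function.iterate_succ_apply']
  have htS : ∀ k, t k ∈ S := by
    intro k
    cases k with
    | zero => exact hjpS 0
    | succ m => rw [htsucc m]; exact hσS _
  have htmono : StrictMono t := strictMono_nat_of_lt_succ (by
    intro k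
    rw [htsucc k]
    exact hσgt (t k))
  have hpig : ∃ a b : ℕ, a < b ∧ t a % N = t b % N := by
    have hmaps : ∀ k ∈ Finset.range (N.toNat + 1), t k % N ∈ Finset.Ico (0:ℤ) N := by
      intro k _
      rw [Finset.mem_Ico]
      exact ⟨Int.emod_nonneg _ (by omega), Int.emod_lt_of_pos _ (by omega)⟩
    have hcard : (Finset.Ico (0:ℤ) N).card < (Finset.range (N.toNat + 1)).card := by
      rw [Int.card_Ico, Finset.card_range]
      omega
    obtain ⟨a, ha, b, hb, hab, heq⟩ :=
      Finset.exists_ne_map_eq_of_card_lt_of_maps_to hcard hmaps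
    rcases lt_or_gt_of_ne hab with h | h
    · exact ⟨a, b, h, heq⟩
    · exact ⟨b, a, h, heq.symm⟩
  obtain ⟨a, b, hab, hmodeq⟩ := hpig
  set M : ℤ := t b - t a with hM
  have hM0 : 0 < M := by
    have := htmono hab
    omega
  have hdvd : N ∣ M := by
    have h1 : (t a - t b) % N = 0 := by
      rw [Int.emod_eq_emod_iff_emod_sub_eq_zero] at hmodeq
      exact hmodeq
    have h2 : N ∣ (t a - t b) := Int.dvd_of_emod_eq_zero h1
    have h3 := dvd_neg.mpr h2
    rw [show -(t a - t b) = t b - t a by ring] at h3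
    exact h3
  set T : ℕ := b - a with hT
  have hT1 : 1 ≤ T := by omega
  set β : ℤ := t a with hβ
  have hβS : β ∈ S := htS a
  have hcycle : σ^[T] β = β + M := by
    have h1 : σ^[T] (σ^[a] (jp 0)) = σ^[T + a] (jp 0) := (Function.iterate_add_apply σ T a _).symm
    have h2 : T + a = b := by omega
    rw [h2] at h1
    show σ^[T] (t a) = t a + M
    have : σ^[T] (t a) = t b := h1
    omega
  -- the doubly-infinite sequence
  have hTpos : (0:ℤ) < (T:ℤ) := by exact_mod_cast hT1
  have hdivmod : ∀ j q r : ℤ, j = (T:ℤ) * q + r → 0 ≤ r → r < T →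
      j / (T:ℤ) = q ∧ j % (T:ℤ) = r := by
    intro j q r hj h0 h1
    have hd : j / (T:ℤ) = q := by
      rw [hj, show (T:ℤ) * q + r = r + (T:ℤ) * q by ring,
        Int.add_mul_ediv_left r q (by omega : (T:ℤ) ≠ 0),
        Int.ediv_eq_zero_of_lt h0 h1]
      ring
    refine ⟨hd, ?_⟩
    have := Int.emod_def j (T:ℤ)
    rw [hd] at this
    omega
  set sh : ℤ → ℤ := fun j => σ^[(j % (T:ℤ)).toNat] β + M * (j / (T:ℤ)) with hsh
  have hdvdMq : ∀ q : ℤ, N ∣ M * q := fun q => Dvd.dvd.mul_right hdvd q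
  have hiterS : ∀ k : ℕ, σ^[k] β ∈ S := by
    intro k
    cases k with
    | zero => exact hβS
    | succ m => rw [Function.iterate_succ_apply']; exact hσS _
  have hshS : ∀ j, sh j ∈ S := by
    intro j
    exact hSshift (M * (j / (T:ℤ))) (hdvdMq _) _ (hiterS _)
  have hshstep : ∀ j, sh (j + 1) = σ (sh j) := by
    intro j
    have h0 : 0 ≤ j % (T:ℤ) := Int.emod_nonneg _ (by omega)
    have h1 : j % (T:ℤ) < (T:ℤ) := Int.emod_lt_of_pos _ hTpos
    have hj : j = (T:ℤ) * (j / (T:ℤ)) + j % (T:ℤ) := (Int.mul_ediv_add_emod j (T:ℤ)).symm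
    rcases lt_or_eq_of_le (show j % (T:ℤ) + 1 ≤ (T:ℤ) by omega) with hcase | hcase
    · -- no wrap
      obtain ⟨hd, hm⟩ := hdivmod (j+1) (j / (T:ℤ)) (j % (T:ℤ) + 1) (by omega) (by omega) hcase
      show σ^[((j+1) % (T:ℤ)).toNat] β + M * ((j+1) / (T:ℤ))
          = σ (σ^[(j % (T:ℤ)).toNat] β + M * (j / (T:ℤ)))
      rw [hd, hm, hσshift (M * (j / (T:ℤ))) (hdvdMq _) _]
      have hnat : (j % (T:ℤ) + 1).toNat = (j % (T:ℤ)).toNat + 1 := by omega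
      rw [hnat, Function.iterate_succ_apply']
    · -- wrap
      obtain ⟨hd, hm⟩ := hdivmod (j+1) (j / (T:ℤ) + 1) 0
        (by rw [mul_add, mul_one]; omega) (by omega) hTpos
      show σ^[((j+1) % (T:ℤ)).toNat] β + M * ((j+1) / (T:ℤ))
          = σ (σ^[(j % (T:ℤ)).toNat] β + M * (j / (T:ℤ)))
      rw [hd, hm, hσshift (M * (j / (T:ℤ))) (hdvdMq _) _]
      simp only [Int.toNat_zero, Function.iterate_zero, id]
      obtain ⟨T', hT'⟩ : ∃ T', T = T' + 1 := ⟨T - 1, by omega⟩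
      have hnat : (j % (T:ℤ)).toNat = T' := by omega
      rw [hnat]
      have : σ (σ^[T'] β) = σ^[T' + 1] β := (Function.iterate_succ_apply' σ T' β).symm
      rw [this, ← hT', hcycle]
      ring
  have hshstep2 : ∀ j, sh (j + 1 + 1) = σ (σ (sh j)) := by
    intro j
    rw [hshstep (j+1), hshstep j]
  -- the embedding
  set φ : ℤ → ℤ := fun i => if Even i then sh (i / 2) else f (sh ((i+1)/2) - 1) with hφ
  set φ' : ℤ → ℤ := fun u => if Even u then ω (sh (u/2 + 1)) else ω (f (sh ((u-1)/2) - 1)) with hφ'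
  have htwo : ∀ k : ℤ, (2 * k) / 2 = k := fun k => Int.mul_ediv_cancel_left k (by omega)
  have hφe : ∀ k : ℤ, φ (2 * k) = sh k := by
    intro k
    show (if Even (2*k) then sh ((2*k) / 2) else _) = sh k
    rw [if_pos ⟨k, by ring⟩, htwo]
  have hφo : ∀ k : ℤ, φ (2 * k + 1) = f (sh (k+1) - 1) := by
    intro k
    show (if Even (2*k+1) then _ else f (sh ((2*k+1+1)/2) - 1)) = f (sh (k+1) - 1)
    rw [if_neg (by rw [Int.even_iff]; omega)]
    rw [show 2*k+1+1 = 2*(k+1) by ring, htwo]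
  have hφ'e : ∀ k : ℤ, φ' (2 * k) = ω (sh (k + 1)) := by
    intro k
    show (if Even (2*k) then ω (sh ((2*k)/2 + 1)) else _) = _
    rw [if_pos ⟨k, by ring⟩, htwo]
  have hφ'o : ∀ k : ℤ, φ' (2 * k + 1) = ω (f (sh k - 1)) := by
    intro k
    show (if Even (2*k+1) then _ else ω (f (sh ((2*k+1-1)/2) - 1))) = _
    rw [if_neg (by rw [Int.even_iff]; omega)]
    rw [show 2*k+1-1 = 2*k by ring, htwo]
  refine ⟨φ, φ', ?_, ?_, ?_⟩
  · -- φ strict mono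
    apply strictMono_int_of_lt_succ
    intro i
    rcases Int.even_or_odd i with ⟨k, hk⟩ | ⟨k, hk⟩
    · have hi : i = 2 * k := by omega
      subst hi
      rw [hφe, hφo]
      have h1 := hC4 (sh k) (hshS k)
      rw [← hshstep k] at h1
      exact h1
    · have hi : i = 2 * k + 1 := by omega
      rw [hi, hφo, show 2*k+1+1 = 2*(k+1) by ring, hφe]
      have := hf1 (sh (k+1) - 1)
      omega
  · -- φ' strict mono
    apply strictMono_int_of_lt_succ
    intro u
    rcases Int.even_or_odd u with ⟨k, hk⟩ | ⟨k, hk⟩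
    · have hu : u = 2 * k := by omega
      subst hu
      rw [hφ'e, hφ'o]
      have h1 := hσval (sh k)
      rw [← hshstep k] at h1
      exact h1
    · have hu : u = 2 * k + 1 := by omega
      rw [hu, hφ'o, show 2*k+1+1 = 2*(k+1) by ring, hφ'e]
      have h1 := hC3 (sh k)
      rw [← hshstep2 k] at h1
      exact h1
  · -- the equation
    intro i
    rcases Int.even_or_odd i with ⟨k, hk⟩ | ⟨k, hk⟩
    · have hi : i = 2 * k := by omega
      subst hi
      rw [oscill_even ⟨k, by ring⟩, hφe, show 2*k-2 = 2*(k-1) by ring, hφ'e,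
        show k - 1 + 1 = k by ring]
    · have hi : i = 2 * k + 1 := by omega
      rw [hi, oscill_odd ⟨k, by ring⟩, hφo, show 2*k+1+2 = 2*(k+1)+1 by ring, hφ'o]

end Core

end Stmt8Aux
namespace Stmt8Aux

section Rest

variable {ω : ℤ → ℤ} {N : ℤ}

lemma disp_bound (hN : 1 ≤ N) (hper : ∀ i, ω (i + N) = ω i + N) :
    ∃ B : ℤ, 0 ≤ B ∧ (∀ i, i - B ≤ ω i) ∧ (∀ i, ω i ≤ i + B) := by
  have hne : (Finset.Ioc (0:ℤ) N).Nonempty := ⟨1, by rw [Finset.mem_Ioc]; omega⟩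
  set B := (Finset.Ioc (0:ℤ) N).sup' hne (fun i => |ω i - i|) with hB
  have hBmem : ∀ i ∈ Finset.Ioc (0:ℤ) N, |ω i - i| ≤ B := by
    intro i hi
    rw [hB]
    exact Finset.le_sup' (fun i => |ω i - i|) hi
  have hB0 : 0 ≤ B := le_trans (abs_nonneg _) (hBmem 1 (by rw [Finset.mem_Ioc]; omega))
  have key : ∀ i : ℤ, |ω i - i| ≤ B := by
    intro i
    set q := (i - 1) / N with hq
    set i₀ := i - N * q with hi₀
    have hmod : i - 1 - N * q = (i-1) % N := by rw [hq, Int.emod_def]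
    have h0 : 0 ≤ (i-1) % N := Int.emod_nonneg _ (by omega)
    have h1 : (i-1) % N < N := Int.emod_lt_of_pos _ (by omega)
    have hi₀mem : i₀ ∈ Finset.Ioc (0:ℤ) N := by
      rw [Finset.mem_Ioc]
      omega
    have hshift := per_shift hper q i₀
    rw [show i₀ + N * q = i by rw [hi₀]; ring] at hshift
    have heq : ω i - i = ω i₀ - i₀ := by omega
    rw [heq]
    exact hBmem i₀ hi₀mem
  refine ⟨B, hB0, fun i => ?_, fun i => ?_⟩
  · have := abs_le.mp (key i)
    omega
  · have := abs_le.mp (key i)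
    omega

lemma cut_decomposable {n : ℕ} (hn : 1 ≤ n)
    (hinj : Function.Injective ω)
    (hper : ∀ i : ℤ, ω (i + (n:ℤ)) = ω i + (n:ℤ))
    {c : ℤ} (hcut : IsCutAt ω c) : IsDecomposableAffine ω := by
  have hn' : (1:ℤ) ≤ (n:ℤ) := by exact_mod_cast hn
  have hcut' : ∀ k : ℤ, IsCutAt ω (c + (n:ℤ) * k) := by
    intro k i
    have h1 := hcut (i - (n:ℤ) * k)
    have h2 := per_shift hper k (i - (n:ℤ)*k)
    rw [show i - (n:ℤ)*k + (n:ℤ)*k = i by ring] at h2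
    constructor
    · intro hi
      have := h1.mp (by omega)
      omega
    · intro hi
      have := h1.mpr (by omega)
      omega
  have hval : ∀ a : Fin n, 0 ≤ ω (c + (a:ℤ) + 1) - (c + 1) ∧ ω (c + (a:ℤ) + 1) - (c+1) < n := by
    intro a
    have ha0 : (0:ℤ) ≤ (a:ℤ) := Int.natCast_nonneg _
    have ha1 : (a:ℤ) < n := by exact_mod_cast a.isLt
    have h1 : ¬ (ω (c + (a:ℤ) + 1) ≤ c) := by
      intro h
      have := (hcut _).mpr h
      omega
    have h2 : ω (c + (a:ℤ) + 1) ≤ c + (n:ℤ) := by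
      have h3 := (hcut' 1 (c + (a:ℤ) + 1)).mp (by omega)
      omega
    omega
  set pm : Fin n → Fin n := fun a => ⟨(ω (c + (a:ℤ) + 1) - (c+1)).toNat, by
      have := hval a; omega⟩ with hpm
  have hpmval : ∀ a : Fin n, ((pm a : Fin n) : ℤ) = ω (c + (a:ℤ) + 1) - (c+1) := by
    intro a
    show (((ω (c + (a:ℤ) + 1) - (c+1)).toNat : ℕ) : ℤ) = _
    exact Int.toNat_of_nonneg (hval a).1
  have hpminj : Function.Injective pm := by
    intro a b hab
    have h1 : ((pm a : Fin n) : ℤ) = ((pm b : Fin n) : ℤ) := by rw [hab]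
    rw [hpmval a, hpmval b] at h1
    have h2 : ω (c + (a:ℤ) + 1) = ω (c + (b:ℤ) + 1) := by omega
    have h3 := hinj h2
    have h4 : (a:ℤ) = (b:ℤ) := by omega
    exact Fin.ext (by exact_mod_cast h4)
  have hpmbij : Function.Bijective pm := Finite.injective_iff_bijective.mp hpminj
  set π : Equiv.Perm (Fin n) := Equiv.ofBijective pm hpmbij with hπ
  refine ⟨c, n, hn, π, ?_⟩
  funext j
  simp only [shiftPerm, infiniteSum]
  set r := (j - c - 1) % (n:ℤ) with hr
  set k := (j - c - 1) / (n:ℤ) with hk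
  have h0 : 0 ≤ r := Int.emod_nonneg _ (by omega)
  have h1 : r < n := Int.emod_lt_of_pos _ (by omega)
  have hieq : j - c - 1 = (n:ℤ) * k + r := by rw [hr, hk, Int.emod_def]; ring
  have hπval : ∀ (x : Fin n), ((π x : Fin n) : ℤ) = ω (c + (x:ℤ) + 1) - (c+1) := by
    intro x
    have : π x = pm x := rfl
    rw [this, hpmval]
  rw [hπval]
  have hfin : ((⟨r.toNat, by omega⟩ : Fin n) : ℤ) = r := by
    show ((r.toNat : ℕ) : ℤ) = r
    exact Int.toNat_of_nonneg h0
  rw [hfin]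
  have hsh := per_shift hper k (c + r + 1)
  rw [show c + r + 1 + (n:ℤ) * k = j by omega] at hsh
  omega

end Rest

end Stmt8Aux

/-- an affine permutation is decomposable iff it avoids the infinite
increasing oscillation `𝒪`. -/
theorem stmt8 (n : ℕ) (hn : 1 ≤ n) (ω : ℤ → ℤ) (hω : IsAffinePerm n ω) :
    IsDecomposableAffine ω ↔ ¬ ContainsAffine ω oscillO := by
  obtain ⟨hbij, hper, hsum⟩ := hω
  have hinj := hbij.injective
  have hn' : (1:ℤ) ≤ (n:ℤ) := by exact_mod_cast hn
  constructor
  · intro hdec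
    obtain ⟨c, hcut⟩ := Stmt8Aux.decomp_cut hdec
    exact Stmt8Aux.cut_not_contains hcut
  · intro hav
    by_contra hnd
    apply hav
    have hnc : ∀ c, ¬ Stmt8Aux.IsCutAt ω c := fun c hc =>
      hnd (Stmt8Aux.cut_decomposable hn hinj hper hc)
    obtain ⟨B, hB0, hBl, hBu⟩ := Stmt8Aux.disp_bound hn' hper
    have hIccIoc : Finset.Icc (1:ℤ) (n:ℤ) = Finset.Ioc 0 (n:ℤ) := by
      ext x
      rw [Finset.mem_Icc, Finset.mem_Ioc]
      omega
    have hsum' : ∑ i ∈ Finset.Ioc 0 (n:ℤ), ω i = ∑ i ∈ Finset.Ioc 0 (n:ℤ), i := by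
      rw [← hIccIoc]
      exact hsum
    have hDE := fun c => Stmt8Aux.noCut_both hn' hinj hper hsum' hB0 hBl hBu (hnc c)
    exact Stmt8Aux.contains_of_DE hn' hinj hper hB0 hBl hBu
      (fun c => (hDE c).1) (fun c => (hDE c).2)
end

section
/- An affine permutation ω is decomposable if and only if its inversion graph G(ω) is not connected. -/
section Stmt10Aux
open Finset

def HasCut (ω : ℤ → ℤ) (s : ℤ) : Prop := ∀ i j : ℤ, i ≤ s → s < j → ω i < ω j

lemma shift_mul {n : ℕ} {ω : ℤ → ℤ} (hper : ∀ i : ℤ, ω (i + n) = ω i + n) :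
    ∀ (k : ℤ) (i : ℤ), ω (i + k * n) = ω i + k * n := by
  have hdown : ∀ i : ℤ, ω (i - n) = ω i - n := by
    intro i; have := hper (i - n)
    rw [show i - (n:ℤ) + n = i by ring] at this; omega
  intro k
  induction k using Int.induction_on with
  | zero => simp
  | succ k ih => intro i
                 have h2 : i + (k + 1 : ℤ) * n = i + k * n + n := by ring
                 rw [h2, hper (i + k * n), ih i]; ring
  | pred k ih => intro i
                 have h2 : i + (-(k:ℤ) - 1) * n = i + (-(k:ℤ)) * n - n := by ring
                 rw [h2, hdown, ih i]; ring

-- window_sum from before (assume it compiles, paste)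
lemma ins_top (a b : ℤ) (h : a ≤ b + 1) : Finset.Icc a (b+1) = insert (b+1) (Finset.Icc a b) := by
  ext x; simp only [mem_Icc, mem_insert]; omega

lemma ins_bot (a b : ℤ) (h : a ≤ b) : Finset.Icc a b = insert a (Finset.Icc (a+1) b) := by
  ext x; simp only [mem_Icc, mem_insert]; omega

lemma window_sum {n : ℕ} (hn : 1 ≤ n) (f : ℤ → ℤ) (hper : ∀ i : ℤ, f (i + n) = f i) :
    ∀ a : ℤ, ∑ i ∈ Finset.Icc (a+1) (a+n), f i = ∑ i ∈ Finset.Icc (1:ℤ) (n:ℤ), f i := by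
  have key : ∀ a : ℤ, ∑ i ∈ Finset.Icc (a+1+1) (a+1+n), f i = ∑ i ∈ Finset.Icc (a+1) (a+n), f i := by
    intro a
    have h1 : Finset.Icc (a+1+1) (a+1+(n:ℤ)) = insert (a+(n:ℤ)+1) (Finset.Icc (a+2) (a+n)) := by
      have := ins_top (a+2) (a+(n:ℤ)) (by omega); convert this using 2 <;> ring
    have h2 : Finset.Icc (a+1) (a+(n:ℤ)) = insert (a+1) (Finset.Icc (a+2) (a+n)) := by
      have := ins_bot (a+1) (a+(n:ℤ)) (by omega); convert this using 2; ring
    rw [h1, h2, Finset.sum_insert (by simp [mem_Icc]), Finset.sum_insert (by simp [mem_Icc])]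
    have : f (a + (n:ℤ) + 1) = f (a+1) := by
      have := hper (a+1); rw [show a + (n:ℤ) + 1 = a + 1 + (n:ℤ) by ring, this]
    omega
  intro a
  induction a using Int.induction_on with
  | zero => norm_num
  | succ k ih => rw [show ((k:ℤ)+1) = (k:ℤ)+1 from rfl, key k, ih]
  | pred k ih => have h := key (-(k:ℤ)-1)
                 rw [show (-(k:ℤ)-1+1) = -(k:ℤ) from by ring] at h
                 rw [show (-(k:ℤ)-1+1) = -(k:ℤ) from by ring, ← h]
                 exact ih

lemma infsum_le {m : ℕ} (hm : 0 < m) (π : Equiv.Perm (Fin m)) {i : ℤ} (hi : i ≤ 0) :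
    infiniteSum hm π i ≤ 0 := by
  unfold infiniteSum
  set q := (i - 1) / (m : ℤ) with hq
  set r := (i - 1) % (m : ℤ) with hr
  have h0 : (0 : ℤ) < (m : ℤ) := by exact_mod_cast hm
  have h1 : 0 ≤ r := Int.emod_nonneg _ h0.ne'
  have h2 : r < m := Int.emod_lt_of_pos _ h0
  have h3 : (m : ℤ) * q + r = i - 1 := Int.mul_ediv_add_emod _ _
  have hqneg : q ≤ -1 := by nlinarith
  have hv : ((π ⟨r.toNat, by omega⟩ : Fin m).val : ℤ) < m := by exact_mod_cast (π _).isLt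
  have : (m:ℤ) * q ≤ (m:ℤ) * (-1) := mul_le_mul_of_nonneg_left hqneg (by omega)
  linarith

lemma infsum_ge {m : ℕ} (hm : 0 < m) (π : Equiv.Perm (Fin m)) {i : ℤ} (hi : 1 ≤ i) :
    1 ≤ infiniteSum hm π i := by
  unfold infiniteSum
  set q := (i - 1) / (m : ℤ) with hq
  set r := (i - 1) % (m : ℤ) with hr
  have h0 : (0 : ℤ) < (m : ℤ) := by exact_mod_cast hm
  have h1 : 0 ≤ r := Int.emod_nonneg _ h0.ne'
  have h2 : r < m := Int.emod_lt_of_pos _ h0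
  have h3 : (m : ℤ) * q + r = i - 1 := Int.mul_ediv_add_emod _ _
  have hqpos : 0 ≤ q := by nlinarith
  have hv : (0:ℤ) ≤ ((π ⟨r.toNat, by omega⟩ : Fin m).val : ℤ) := by positivity
  have : (0:ℤ) ≤ (m:ℤ) * q := mul_nonneg (by omega) hqpos
  linarith

lemma decomposable_cut {ω : ℤ → ℤ} (h : IsDecomposableAffine ω) : ∃ s, HasCut ω s := by
  obtain ⟨r, m, hm, π, rfl⟩ := h
  refine ⟨r, fun i j hi hj => ?_⟩
  unfold shiftPerm
  have h1 : infiniteSum hm π (i - r) ≤ 0 := infsum_le hm π (by omega)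
  have h2 : 1 ≤ infiniteSum hm π (j - r) := infsum_ge hm π (by omega)
  omega

lemma cut_decomposable {n : ℕ} (hn : 1 ≤ n) {ω : ℤ → ℤ} (hω : IsAffinePerm n ω)
    {s : ℤ} (hc : HasCut ω s) : IsDecomposableAffine ω := by
  obtain ⟨hbij, hper, hsum⟩ := hω
  have hmul := shift_mul hper
  have hN : (0:ℤ) < (n:ℤ) := by exact_mod_cast hn
  -- the max of ω on the window (s-n, s]
  have hWne : (Finset.image ω (Finset.Icc (s - n + 1) s)).Nonempty :=
    ⟨ω s, Finset.mem_image_of_mem ω (by simp [mem_Icc]; omega)⟩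
  set t := (Finset.image ω (Finset.Icc (s - n + 1) s)).max' hWne with ht
  -- P1
  have P1 : ∀ i : ℤ, i ≤ s → ω i ≤ t := by
    intro i hi
    set k := (s - i) / (n:ℤ) with hk
    have h1 : 0 ≤ (s - i) % n := Int.emod_nonneg _ hN.ne'
    have h2 : (s - i) % n < n := Int.emod_lt_of_pos _ hN
    have h3 : (n:ℤ) * k + (s - i) % n = s - i := Int.mul_ediv_add_emod _ _
    have hk0 : 0 ≤ k := Int.ediv_nonneg (by omega) (by omega)
    have hmem : i + k * n ∈ Finset.Icc (s - n + 1) s := by simp [mem_Icc]; constructor <;> nlinarith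
    have hle : ω (i + k * n) ≤ t := Finset.le_max' _ _ (Finset.mem_image_of_mem ω hmem)
    rw [hmul k i] at hle
    nlinarith
  -- P2
  obtain ⟨i0, hi0mem, hi0⟩ := Finset.mem_image.mp ((Finset.image ω (Finset.Icc (s - n + 1) s)).max'_mem hWne)
  have hi0s : i0 ≤ s := (mem_Icc.mp hi0mem).2
  -- P3
  have P3 : ∀ j : ℤ, s < j → t < ω j := by
    intro j hj
    have h' : t = ω i0 := by rw [ht, hi0]
    rw [h']; exact hc i0 j hi0s hj
  -- P4
  have P4 : ∀ x : ℤ, x ≤ t → ∃ i ≤ s, ω i = x := by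
    intro x hx
    obtain ⟨i, rfl⟩ := hbij.2 x
    refine ⟨i, ?_, rfl⟩
    by_contra hgt
    exact absurd (P3 i (by omega)) (by omega)
  -- characterization of window images
  have timage : ∀ y : ℤ, (∃ j, s < j ∧ j ≤ s + n ∧ ω j = y) ↔ (t < y ∧ y ≤ t + n) := by
    intro y
    constructor
    · rintro ⟨j, hj1, hj2, rfl⟩
      refine ⟨P3 j hj1, ?_⟩
      have := P1 (j - n) (by omega)
      have heq : ω (j - n) = ω j - n := by
        have := hper (j - n); rw [show j - (n:ℤ) + n = j by ring] at this; omega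
      omega
    · rintro ⟨hy1, hy2⟩
      obtain ⟨i, hi, hieq⟩ := P4 (y - n) (by omega)
      refine ⟨i + n, ?_, by omega, by rw [hper i, hieq]; ring⟩
      by_contra hle
      have := P1 (i + n) (by omega)
      rw [hper i, hieq] at this
      omega
  have himg : Finset.image ω (Finset.Icc (s+1) (s+n)) = Finset.Icc (t+1) (t+n) := by
    ext y
    rw [Finset.mem_image]
    constructor
    · rintro ⟨j, hj, rfl⟩
      rw [mem_Icc] at hj
      have := (timage (ω j)).mp ⟨j, by omega, by omega, rfl⟩
      rw [mem_Icc]; omega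
    · intro hy
      rw [mem_Icc] at hy
      obtain ⟨j, h1, h2, h3⟩ := (timage y).mpr ⟨by omega, by omega⟩
      exact ⟨j, by rw [mem_Icc]; omega, h3⟩
  -- sum argument: t = s
  have hts : t = s := by
    have E1 : ∑ j ∈ Finset.Icc (s+1) (s+(n:ℤ)), ω j = ∑ y ∈ Finset.Icc (t+1) (t+(n:ℤ)), y := by
      rw [← himg, Finset.sum_image (fun a _ b _ h => hbij.1 h)]
    have E2 : ∑ j ∈ Finset.Icc (s+1) (s+(n:ℤ)), (ω j - j) = 0 := by
      rw [window_sum hn (fun i => ω i - i)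
        (fun i => by show ω (i+(n:ℤ)) - (i+(n:ℤ)) = ω i - i; rw [hper]; ring) s]
      rw [Finset.sum_sub_distrib, hsum]; ring
    have E3 : ∑ y ∈ Finset.Icc (t+1) (t+(n:ℤ)), y
        = ∑ j ∈ Finset.Icc (s+1) (s+(n:ℤ)), (j + (t - s)) := by
      have hmap := Finset.map_add_right_Icc (s+1) (s+(n:ℤ)) (t-s)
      rw [show s+1+(t-s) = t+1 by ring, show s+(n:ℤ)+(t-s) = t+(n:ℤ) by ring] at hmap
      rw [← hmap, Finset.sum_map]
      simp [addRightEmbedding]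
    have E4 : ∑ j ∈ Finset.Icc (s+1) (s+(n:ℤ)), (j + (t - s))
        = (∑ j ∈ Finset.Icc (s+1) (s+(n:ℤ)), j) + n * (t - s) := by
      rw [Finset.sum_add_distrib, Finset.sum_const, Int.card_Icc,
        show s + (n:ℤ) + 1 - (s+1) = (n:ℤ) by ring, Int.toNat_natCast]
      rw [nsmul_eq_mul]
    have E5 : ∑ j ∈ Finset.Icc (s+1) (s+(n:ℤ)), ω j = (∑ j ∈ Finset.Icc (s+1) (s+(n:ℤ)), j) := by
      have := Finset.sum_sub_distrib (s := Finset.Icc (s+1) (s+(n:ℤ))) (f := ω) (g := id)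
      simp only [id] at this
      omega
    have : (n:ℤ) * (t - s) = 0 := by omega
    have := mul_eq_zero.mp this
    omega
  -- block property
  have block : ∀ j : ℤ, s < j → j ≤ s + n → s < ω j ∧ ω j ≤ s + n := by
    intro j h1 h2
    have := (timage (ω j)).mp ⟨j, h1, h2, rfl⟩
    omega
  -- build the permutation
  have hb : ∀ j : Fin n, (ω (s + 1 + (j.val : ℤ)) - (s+1)).toNat < n := by
    intro j
    have hj : (j.val : ℤ) < n := by exact_mod_cast j.isLt
    have := block (s + 1 + (j.val : ℤ)) (by omega) (by omega)
    omega
  have hval : ∀ j : Fin n, s < ω (s + 1 + (j.val:ℤ)) ∧ ω (s + 1 + (j.val:ℤ)) ≤ s + n := by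
    intro j
    have hj : (j.val : ℤ) < n := by exact_mod_cast j.isLt
    exact block _ (by omega) (by omega)
  set π₀ : Fin n → Fin n := fun j => ⟨(ω (s + 1 + (j.val : ℤ)) - (s+1)).toNat, hb j⟩ with hπ₀
  have hinj : Function.Injective π₀ := by
    intro a b hab
    simp only [hπ₀, Fin.mk.injEq] at hab
    have ha := hval a
    have hb' := hval b
    have h1 : ω (s+1+(a.val:ℤ)) = ω (s+1+(b.val:ℤ)) := by omega
    have h2 := hbij.1 h1
    have h3 : (a.val:ℤ) = (b.val:ℤ) := by omega
    exact Fin.ext (by exact_mod_cast h3)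
  refine ⟨s, n, hn, Equiv.ofBijective π₀ (Finite.injective_iff_bijective.mp hinj),
    funext fun i => ?_⟩
  show ω i = infiniteSum hn (Equiv.ofBijective π₀ _) (i - s) + s
  unfold infiniteSum
  simp only [Equiv.ofBijective_apply, hπ₀]
  set q := (i - s - 1) / (n:ℤ) with hq
  set r := (i - s - 1) % (n:ℤ) with hrr
  have h1 : 0 ≤ r := Int.emod_nonneg _ hN.ne'
  have h2 : r < n := Int.emod_lt_of_pos _ hN
  have h3 : (n:ℤ) * q + r = i - s - 1 := Int.mul_ediv_add_emod _ _
  have hrcast : ((r.toNat : ℕ) : ℤ) = r := Int.toNat_of_nonneg h1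
  rw [hrcast]
  have hblk := block (s + 1 + r) (by omega) (by omega)
  have hcast : ((ω (s+1+r) - (s+1)).toNat : ℤ) = ω (s+1+r) - s - 1 := by omega
  rw [hcast]
  have hidx : i = (s + 1 + r) + q * (n:ℤ) := by linarith [h3]
  rw [hidx, hmul q (s+1+r)]
  ring

lemma cut_not_connected {ω : ℤ → ℤ} {s : ℤ} (hc : HasCut ω s) :
    ¬ (invGraph ω).Connected := by
  intro hconn
  obtain ⟨w⟩ := hconn.preconnected s (s+1)
  have key : ∀ a b : ℤ, (invGraph ω).Walk a b → a ≤ s → b ≤ s := by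
    intro a b w
    induction w with
    | nil => exact fun h => h
    | @cons u v bw h p ih =>
      intro ha
      apply ih
      by_contra hgt
      rcases h with ⟨hlt, hv⟩ | ⟨hlt, hv⟩
      · have := hc u v ha (by omega); omega
      · omega
  have := key s (s+1) w le_rfl
  omega

lemma no_cut_connected {ω : ℤ → ℤ} (hinj : Function.Injective ω)
    (h : ∀ s : ℤ, ¬ HasCut ω s) : (invGraph ω).Connected := by
  have step : ∀ s : ℤ, (invGraph ω).Reachable s (s+1) := by
    intro s
    have := h s
    unfold HasCut at this
    push_neg at this
    obtain ⟨i, j, hi, hj, hle⟩ := this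
    have hij : i < j := by omega
    have hne : ω i ≠ ω j := fun e => by have := hinj e; omega
    have hinv : ω j < ω i := by omega
    have eij : (invGraph ω).Adj i j := Or.inl ⟨hij, hinv⟩
    have reach : ∀ k : ℤ, i ≤ k → k ≤ j → (invGraph ω).Reachable k i := by
      intro k hk1 hk2
      rcases eq_or_lt_of_le hk1 with rfl | h1
      · exact SimpleGraph.Reachable.refl _
      rcases eq_or_lt_of_le hk2 with rfl | h2
      · exact (SimpleGraph.Adj.reachable eij).symm
      rcases lt_or_gt_of_ne (fun e => by have := hinj e; omega : ω k ≠ ω i) with hlt | hgt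
      · exact SimpleGraph.Adj.reachable (Or.inr ⟨h1, hlt⟩)
      · have : (invGraph ω).Adj k j := Or.inl ⟨h2, by omega⟩
        exact (SimpleGraph.Adj.reachable this).trans (SimpleGraph.Adj.reachable eij).symm
    exact ((reach s hi (by omega)).trans (reach (s+1) (by omega) (by omega)).symm)
  have chain : ∀ a b : ℤ, a ≤ b → (invGraph ω).Reachable a b := by
    intro a b hab
    obtain ⟨m, rfl⟩ : ∃ m : ℕ, b = a + m := ⟨(b-a).toNat, by omega⟩
    clear hab
    induction m with
    | zero => simpa using SimpleGraph.Reachable.refl a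
    | succ m ih =>
      have h2 : (a + ((m:ℤ)+1) : ℤ) = (a + m) + 1 := by ring
      rw [show ((m+1 : ℕ) : ℤ) = (m:ℤ)+1 from by push_cast; ring, h2]
      exact ih.trans (step (a+m))
  constructor
  intro a b
  rcases le_total a b with hab | hab
  · exact chain a b hab
  · exact (chain b a hab).symm

end Stmt10Aux

/-- an affine permutation is decomposable iff its inversion graph
is not connected. -/
theorem stmt10 (n : ℕ) (hn : 1 ≤ n) (ω : ℤ → ℤ) (hω : IsAffinePerm n ω) :
    IsDecomposableAffine ω ↔ ¬ (invGraph ω).Connected := by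
  constructor
  · intro hd
    obtain ⟨s, hc⟩ := decomposable_cut hd
    exact cut_not_connected hc
  · intro hnc
    have hex : ∃ s, HasCut ω s := by
      by_contra h
      push_neg at h
      exact hnc (no_cut_connected hω.1.injective h)
    obtain ⟨s, hc⟩ := hex
    exact cut_decomposable hn hω hc
end

section
/- Let ω : ℤ → ℤ be a bijection whose inversion graph G(ω) is a doubly infinite path. Then ω is order-isomorphic to 𝒪 or to Σ¹𝒪; that is, there exist strictly increasing bijections u, v : ℤ → ℤ such that either ω(u(i)) = v(𝒪(i)) for all i ∈ ℤ, or ω(u(i)) = v((Σ¹𝒪)(i)) for all i ∈ ℤ. -/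
/-- Auxiliary: `i` has an inversion to its right. -/
abbrev UpL (ω : ℤ → ℤ) (i : ℤ) : Prop := ∃ j, i < j ∧ ω j < ω i

def oscInv : ℤ → ℤ := fun i => if Odd i then i - 2 else i + 2

def shiftOInv : ℤ → ℤ := fun i => oscInv (i - 1) + 1

lemma osc_li (i : ℤ) : oscInv (oscillO i) = i := by
  unfold oscillO oscInv
  rcases Int.even_or_odd i with ⟨a, rfl⟩ | ⟨a, rfl⟩
  · have h1 : ¬ Odd (a + a) := by rintro ⟨c, hc⟩; omega
    have h2 : ¬ Odd (a + a - 2) := by rintro ⟨c, hc⟩; omega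
    rw [if_neg h1, if_neg h2]; ring
  · rw [if_pos (show Odd (2 * a + 1) from ⟨a, rfl⟩),
      if_pos (show Odd (2 * a + 1 + 2) from ⟨a + 1, by ring⟩)]
    ring

lemma osc_ri (i : ℤ) : oscillO (oscInv i) = i := by
  unfold oscillO oscInv
  rcases Int.even_or_odd i with ⟨a, rfl⟩ | ⟨a, rfl⟩
  · have h1 : ¬ Odd (a + a) := by rintro ⟨c, hc⟩; omega
    have h2 : ¬ Odd (a + a + 2) := by rintro ⟨c, hc⟩; omega
    rw [if_neg h1, if_neg h2]; ring
  · rw [if_pos (show Odd (2 * a + 1) from ⟨a, rfl⟩),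
      if_pos (show Odd (2 * a + 1 - 2) from ⟨a - 1, by ring⟩)]
    ring

lemma shift_li (i : ℤ) : shiftOInv (shiftPerm 1 oscillO i) = i := by
  unfold shiftOInv shiftPerm
  rw [show oscillO (i - 1) + 1 - 1 = oscillO (i - 1) by ring, osc_li]; ring

lemma shift_ri (i : ℤ) : shiftPerm 1 oscillO (shiftOInv i) = i := by
  unfold shiftOInv shiftPerm
  rw [show oscInv (i - 1) + 1 - 1 = oscInv (i - 1) by ring, osc_ri]; ring

lemma shift_eq (k : ℤ) : shiftPerm 1 oscillO k = if Even k then k + 2 else k - 2 := by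
  unfold shiftPerm oscillO
  rcases Int.even_or_odd k with ⟨a, rfl⟩ | ⟨a, rfl⟩
  · rw [if_pos (show Odd (a + a - 1) from ⟨a - 1, by ring⟩),
      if_pos (show Even (a + a) from ⟨a, rfl⟩)]
    ring
  · have h1 : ¬ Odd (2 * a + 1 - 1) := by rintro ⟨c, hc⟩; omega
    have h2 : ¬ Even (2 * a + 1) := by rintro ⟨c, hc⟩; omega
    rw [if_neg h1, if_neg h2]
    ring

lemma osc_inv_iff (i j : ℤ) (hij : i < j) :
    oscillO j < oscillO i ↔ (Odd i ∧ (j = i + 1 ∨ j = i + 3)) := by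
  unfold oscillO
  rcases Int.even_or_odd i with ⟨a, rfl⟩ | ⟨a, rfl⟩
  · have hi' : ¬ Odd (a + a) := by rintro ⟨c, hc⟩; omega
    rw [if_neg hi']
    rcases Int.even_or_odd j with ⟨b, rfl⟩ | ⟨b, rfl⟩
    · have hj' : ¬ Odd (b + b) := by rintro ⟨c, hc⟩; omega
      rw [if_neg hj']
      constructor
      · intro hlt; exfalso; omega
      · rintro ⟨hh, -⟩; exact absurd hh hi'
    · rw [if_pos (show Odd (2 * b + 1) from ⟨b, rfl⟩)]
      constructor
      · intro hlt; exfalso; omega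
      · rintro ⟨hh, -⟩; exact absurd hh hi'
  · rw [if_pos (show Odd (2 * a + 1) from ⟨a, rfl⟩)]
    rcases Int.even_or_odd j with ⟨b, rfl⟩ | ⟨b, rfl⟩
    · have hj' : ¬ Odd (b + b) := by rintro ⟨c, hc⟩; omega
      rw [if_neg hj']
      constructor
      · intro hlt; exact ⟨⟨a, rfl⟩, by omega⟩
      · rintro ⟨-, hh | hh⟩ <;> omega
    · rw [if_pos (show Odd (2 * b + 1) from ⟨b, rfl⟩)]
      constructor
      · intro hlt; exfalso; omega
      · rintro ⟨-, hh | hh⟩ <;> omega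

lemma shift_inv_iff (i j : ℤ) (hij : i < j) :
    shiftPerm 1 oscillO j < shiftPerm 1 oscillO i ↔ (Even i ∧ (j = i + 1 ∨ j = i + 3)) := by
  rw [shift_eq, shift_eq]
  rcases Int.even_or_odd i with ⟨a, rfl⟩ | ⟨a, rfl⟩
  · rw [if_pos (show Even (a + a) from ⟨a, rfl⟩)]
    rcases Int.even_or_odd j with ⟨b, rfl⟩ | ⟨b, rfl⟩
    · rw [if_pos (show Even (b + b) from ⟨b, rfl⟩)]
      constructor
      · intro hlt; exfalso; omega
      · rintro ⟨-, hh | hh⟩ <;> omega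
    · have hj' : ¬ Even (2 * b + 1) := by rintro ⟨c, hc⟩; omega
      rw [if_neg hj']
      constructor
      · intro hlt; exact ⟨⟨a, rfl⟩, by omega⟩
      · rintro ⟨-, hh | hh⟩ <;> omega
  · have hi' : ¬ Even (2 * a + 1) := by rintro ⟨c, hc⟩; omega
    rw [if_neg hi']
    rcases Int.even_or_odd j with ⟨b, rfl⟩ | ⟨b, rfl⟩
    · rw [if_pos (show Even (b + b) from ⟨b, rfl⟩)]
      constructor
      · intro hlt; exfalso; omega
      · rintro ⟨hh, -⟩; exact absurd hh hi'
    · have hj' : ¬ Even (2 * b + 1) := by rintro ⟨c, hc⟩; omega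
      rw [if_neg hj']
      constructor
      · intro hlt; exfalso; omega
      · rintro ⟨hh, -⟩; exact absurd hh hi'

lemma ord_of_inv {ω τ : ℤ → ℤ} (hω : Function.Injective ω) (hτ : Function.Injective τ)
    {P : ℤ → ℤ → Prop}
    (h1 : ∀ i j, i < j → (ω j < ω i ↔ P i j)) (h2 : ∀ i j, i < j → (τ j < τ i ↔ P i j)) :
    ∀ i j, τ i < τ j ↔ ω i < ω j := by
  intro i j
  rcases lt_trichotomy i j with hij | rfl | hij
  · have e1 : ω i ≠ ω j := fun e => absurd (hω e) (by omega)
    have e2 : τ i ≠ τ j := fun e => absurd (hτ e) (by omega)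
    have o1 : ω i < ω j ∨ ω j < ω i := lt_or_gt_of_ne e1
    have o2 : τ i < τ j ∨ τ j < τ i := lt_or_gt_of_ne e2
    have n1 : ¬ (ω i < ω j ∧ ω j < ω i) := by rintro ⟨x, y⟩; omega
    have n2 : ¬ (τ i < τ j ∧ τ j < τ i) := by rintro ⟨x, y⟩; omega
    have a1 := h1 i j hij
    have a2 := h2 i j hij
    tauto
  · simp
  · have e1 : ω j ≠ ω i := fun e => absurd (hω e) (by omega)
    have e2 : τ j ≠ τ i := fun e => absurd (hτ e) (by omega)
    have o1 : ω j < ω i ∨ ω i < ω j := lt_or_gt_of_ne e1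
    have o2 : τ j < τ i ∨ τ i < τ j := lt_or_gt_of_ne e2
    have n1 : ¬ (ω j < ω i ∧ ω i < ω j) := by rintro ⟨x, y⟩; omega
    have n2 : ¬ (τ j < τ i ∧ τ i < τ j) := by rintro ⟨x, y⟩; omega
    have a1 := h1 j i hij
    have a2 := h2 j i hij
    tauto

lemma assemble (ω τ τinv : ℤ → ℤ) (hbij : Function.Bijective ω)
    (hli : ∀ i, τinv (τ i) = i) (hri : ∀ i, τ (τinv i) = i)
    (hord : ∀ i j : ℤ, τ i < τ j ↔ ω i < ω j) :
    ∃ u v : ℤ → ℤ, StrictMono u ∧ StrictMono v ∧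
      Function.Bijective u ∧ Function.Bijective v ∧ ∀ i, ω (u i) = v (τ i) := by
  refine ⟨id, fun x => ω (τinv x), strictMono_id, ?_, Function.bijective_id, ⟨?_, ?_⟩, ?_⟩
  · intro a b hab
    have hh : τ (τinv a) < τ (τinv b) := by rw [hri a, hri b]; exact hab
    exact (hord _ _).1 hh
  · intro a b e
    have hh : τinv a = τinv b := hbij.1 e
    rw [← hri a, ← hri b, hh]
  · intro y
    obtain ⟨x, hx⟩ := hbij.2 y
    refine ⟨τ x, ?_⟩
    show ω (τinv (τ x)) = y
    rw [hli x]; exact hx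
  · intro i
    show ω i = ω (τinv (τ i))
    rw [hli i]

set_option maxHeartbeats 1600000 in
/-- a bijection `ω : ℤ → ℤ` whose inversion graph is a doubly infinite
path is order-isomorphic to `𝒪` or to `Σ¹𝒪`. -/
theorem stmt11 (ω : ℤ → ℤ) (hbij : Function.Bijective ω)
    (hpath : ∃ h : ℤ → ℤ, Function.Bijective h ∧
      ∀ i j : ℤ, (invGraph ω).Adj (h i) (h j) ↔ |i - j| = 1) :
    ∃ u v : ℤ → ℤ, StrictMono u ∧ StrictMono v ∧
      Function.Bijective u ∧ Function.Bijective v ∧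
      ((∀ i : ℤ, ω (u i) = v (oscillO i)) ∨
        (∀ i : ℤ, ω (u i) = v (shiftPerm 1 oscillO i))) := by
  classical
  obtain ⟨h, ⟨hinjh, hsurj⟩, hadj⟩ := hpath
  have hωinj := hbij.1
  have habs : ∀ x y : ℤ, |x - y| = (1 : ℤ) ↔ (x - y = 1 ∨ x - y = -1) := fun x y =>
    abs_eq (by norm_num)
  have deg2 : ∀ i : ℤ, ∃ a b : ℤ, a ≠ b ∧
      ∀ j : ℤ, (invGraph ω).Adj i j ↔ (j = a ∨ j = b) := by
    intro i
    obtain ⟨k, rfl⟩ := hsurj i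
    refine ⟨h (k - 1), h (k + 1), fun e => by have := hinjh e; omega, fun j => ?_⟩
    constructor
    · intro haj
      obtain ⟨m, rfl⟩ := hsurj j
      have hm := (hadj k m).1 haj
      rw [habs] at hm
      have hm' : m = k - 1 ∨ m = k + 1 := by omega
      rcases hm' with rfl | rfl
      · exact Or.inl rfl
      · exact Or.inr rfl
    · rintro (rfl | rfl)
      · exact (hadj k (k - 1)).2 (by rw [habs]; omega)
      · exact (hadj k (k + 1)).2 (by rw [habs]; omega)
  have hnt : ∀ a b c : ℤ, (invGraph ω).Adj a b → (invGraph ω).Adj b c →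
      (invGraph ω).Adj a c → False := by
    intro a b c hab hbc hac
    obtain ⟨x, rfl⟩ := hsurj a
    obtain ⟨y, rfl⟩ := hsurj b
    obtain ⟨z, rfl⟩ := hsurj c
    have h1 := (hadj x y).1 hab
    have h2 := (hadj y z).1 hbc
    have h3 := (hadj x z).1 hac
    rw [habs] at h1 h2 h3
    omega
  have hnc : ∀ x y a b : ℤ, x ≠ y → a ≠ b → (invGraph ω).Adj x a → (invGraph ω).Adj x b →
      (invGraph ω).Adj y a → (invGraph ω).Adj y b → False := by
    intro x y a b hxy hab h1 h2 h3 h4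
    obtain ⟨p, rfl⟩ := hsurj x
    obtain ⟨q, rfl⟩ := hsurj y
    obtain ⟨r, rfl⟩ := hsurj a
    obtain ⟨s, rfl⟩ := hsurj b
    have hpq : p ≠ q := fun e => hxy (congrArg h e)
    have hrs : r ≠ s := fun e => hab (congrArg h e)
    have e1 := (hadj p r).1 h1
    have e2 := (hadj p s).1 h2
    have e3 := (hadj q r).1 h3
    have e4 := (hadj q s).1 h4
    rw [habs] at e1 e2 e3 e4
    omega
  have mkA : ∀ {i j : ℤ}, i < j → ω j < ω i → (invGraph ω).Adj i j :=
    fun h1 h2 => Or.inl ⟨h1, h2⟩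
  have mkA' : ∀ {i j : ℤ}, j < i → ω i < ω j → (invGraph ω).Adj i j :=
    fun h1 h2 => Or.inr ⟨h1, h2⟩
  have elA : ∀ {i j : ℤ}, (invGraph ω).Adj i j →
      (i < j ∧ ω j < ω i) ∨ (j < i ∧ ω i < ω j) := fun hh => hh
  have key1 : ∀ i : ℤ, UpL ω i → (∃ j, j < i ∧ ω i < ω j) → False := by
    rintro i ⟨j, hij, hji⟩ ⟨k, hki, hik⟩
    exact hnt k i j (mkA hki hik) (mkA hij hji) (mkA (by omega) (by omega))
  have hLR : ∀ i : ℤ, UpL ω i ∨ (∃ j, j < i ∧ ω i < ω j) := by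
    intro i
    obtain ⟨a, b, hab, hiff⟩ := deg2 i
    have ha : (invGraph ω).Adj i a := (hiff a).2 (Or.inl rfl)
    rcases elA ha with ⟨h1, h2⟩ | ⟨h1, h2⟩
    · exact Or.inl ⟨a, h1, h2⟩
    · exact Or.inr ⟨a, h1, h2⟩
  have hnotDown : ∀ i : ℤ, UpL ω i → ∀ j, j < i → ω j < ω i := by
    intro i hL j hj
    rcases lt_trichotomy (ω j) (ω i) with hh | hh | hh
    · exact hh
    · exact absurd (hωinj hh) (by omega)
    · exact (key1 i hL ⟨j, hj, hh⟩).elim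
  have hnotUp : ∀ i : ℤ, ¬ UpL ω i → ∀ j, i < j → ω i < ω j := by
    intro i hR j hj
    rcases lt_trichotomy (ω i) (ω j) with hh | hh | hh
    · exact hh
    · exact absurd (hωinj hh) (by omega)
    · exact absurd ⟨j, hj, hh⟩ hR
  have hLL : ∀ i : ℤ, UpL ω i → UpL ω (i + 1) → False := by
    intro i hLi hLi1
    obtain ⟨a, b, hab, hiff⟩ := deg2 i
    have hAa : (invGraph ω).Adj i a := (hiff a).2 (Or.inl rfl)
    have hAb : (invGraph ω).Adj i b := (hiff b).2 (Or.inr rfl)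
    have hii1 : ω i < ω (i + 1) := hnotDown (i + 1) hLi1 i (by omega)
    have ha : i < a ∧ ω a < ω i := by
      rcases elA hAa with hh | ⟨h1, h2⟩
      · exact hh
      · have := hnotDown i hLi a h1; omega
    have hb : i < b ∧ ω b < ω i := by
      rcases elA hAb with hh | ⟨h1, h2⟩
      · exact hh
      · have := hnotDown i hLi b h1; omega
    obtain ⟨ha1, ha2⟩ := ha
    obtain ⟨hb1, hb2⟩ := hb
    have hane : a ≠ i + 1 := by intro e; rw [e] at ha2; omega
    have hbne : b ≠ i + 1 := by intro e; rw [e] at hb2; omega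
    exact hnc i (i + 1) a b (by omega) hab hAa hAb
      (mkA (by omega) (by omega)) (mkA (by omega) (by omega))
  have hRR : ∀ i : ℤ, ¬ UpL ω i → ¬ UpL ω (i + 1) → False := by
    intro i hRi hRi1
    have hii1 : ω i < ω (i + 1) := hnotUp i hRi (i + 1) (by omega)
    obtain ⟨a, b, hab, hiff⟩ := deg2 (i + 1)
    have hAa : (invGraph ω).Adj (i + 1) a := (hiff a).2 (Or.inl rfl)
    have hAb : (invGraph ω).Adj (i + 1) b := (hiff b).2 (Or.inr rfl)
    have ha : a < i + 1 ∧ ω (i + 1) < ω a := by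
      rcases elA hAa with ⟨h1, h2⟩ | hh
      · exact absurd ⟨a, h1, h2⟩ hRi1
      · exact hh
    have hb : b < i + 1 ∧ ω (i + 1) < ω b := by
      rcases elA hAb with ⟨h1, h2⟩ | hh
      · exact absurd ⟨b, h1, h2⟩ hRi1
      · exact hh
    obtain ⟨ha1, ha2⟩ := ha
    obtain ⟨hb1, hb2⟩ := hb
    have hane : a ≠ i := by intro e; rw [e] at ha2; omega
    have hbne : b ≠ i := by intro e; rw [e] at hb2; omega
    exact hnc (i + 1) i a b (by omega) hab hAa hAb
      (mkA' (by omega) (by omega)) (mkA' (by omega) (by omega))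
  have halt : ∀ i : ℤ, UpL ω i ↔ ¬ UpL ω (i + 1) := by
    intro i
    constructor
    · exact fun h1 h2 => hLL i h1 h2
    · intro h1
      by_contra h2
      exact hRR i h2 h1
  have hsucc : ∀ i : ℤ, UpL ω i → ω (i + 1) < ω i := by
    intro i hLi
    rcases lt_trichotomy (ω (i + 1)) (ω i) with hh | hh | hh
    · exact hh
    · exact absurd (hωinj hh) (by omega)
    · exfalso
      have hR1 : ¬ UpL ω (i + 1) := (halt i).1 hLi
      rcases hLR (i + 1) with hu | ⟨k, hk1, hk2⟩
      · exact hR1 hu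
      · have hki : k ≠ i := by intro e; rw [e] at hk2; omega
        have := hnotDown i hLi k (by omega)
        omega
  have hL2 : ∀ i : ℤ, UpL ω i → UpL ω (i + 2) := by
    intro i hLi
    have h1 := (halt i).1 hLi
    by_contra hcon
    exact h1 ((halt (i + 1)).2 (by rw [show i + 1 + 1 = i + 2 from by ring]; exact hcon))
  have hthird : ∀ i : ℤ, UpL ω i → ω (i + 3) < ω i := by
    intro i hLi
    have hLi2 : UpL ω (i + 2) := hL2 i hLi
    have h23 : ω (i + 3) < ω (i + 2) := by
      have := hsucc (i + 2) hLi2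
      rw [show i + 2 + 1 = i + 3 from by ring] at this
      exact this
    have hR3 : ¬ UpL ω (i + 3) := by
      have := (halt (i + 2)).1 hLi2
      rw [show i + 2 + 1 = i + 3 from by ring] at this
      exact this
    rcases lt_trichotomy (ω (i + 3)) (ω i) with hh | hh | hh
    · exact hh
    · exact absurd (hωinj hh) (by omega)
    · exfalso
      obtain ⟨a, b, hab, hiff⟩ := deg2 (i + 3)
      have hA2 : (invGraph ω).Adj (i + 3) (i + 2) := mkA' (by omega) h23
      have hm : ∃ m, m ≠ i + 2 ∧ (invGraph ω).Adj (i + 3) m := by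
        rcases (hiff (i + 2)).1 hA2 with he | he
        · exact ⟨b, fun e => hab ((e.trans he).symm), (hiff b).2 (Or.inr rfl)⟩
        · exact ⟨a, fun e => hab (e.trans he), (hiff a).2 (Or.inl rfl)⟩
      obtain ⟨m, hm2, hAm⟩ := hm
      have hm3 : m < i + 3 ∧ ω (i + 3) < ω m := by
        rcases elA hAm with ⟨h1, h2⟩ | hh'
        · exact absurd ⟨m, h1, h2⟩ hR3
        · exact hh'
      obtain ⟨hm4, hm5⟩ := hm3
      have hcase : m < i ∨ m = i ∨ m = i + 1 := by omega
      rcases hcase with hc | hc | hc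
      · have := hnotDown i hLi m hc; omega
      · rw [hc] at hm5; omega
      · rw [hc] at hm5; have := hsucc i hLi; omega
  have hinv : ∀ i j : ℤ, i < j → (ω j < ω i ↔ (UpL ω i ∧ (j = i + 1 ∨ j = i + 3))) := by
    intro i j hij
    constructor
    · intro hlt
      have hLi : UpL ω i := ⟨j, hij, hlt⟩
      refine ⟨hLi, ?_⟩
      by_contra hcon
      push_neg at hcon
      obtain ⟨hc1, hc3⟩ := hcon
      obtain ⟨a, b, hab, hiff⟩ := deg2 i
      have h1 := (hiff (i + 1)).1 (mkA (by omega) (hsucc i hLi))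
      have h3 := (hiff (i + 3)).1 (mkA (by omega) (hthird i hLi))
      have hj := (hiff j).1 (mkA hij hlt)
      rcases h1 with e | e <;> rcases h3 with e' | e' <;> rcases hj with e'' | e'' <;> omega
    · rintro ⟨hLi, rfl | rfl⟩
      · exact hsucc i hLi
      · exact hthird i hLi
  have hpar : ∀ i : ℤ, UpL ω i ↔ (Even i ↔ UpL ω 0) := by
    intro i
    induction i using Int.induction_on with
    | zero =>
      exact ⟨fun h0 => ⟨fun _ => h0, fun _ => Even.zero⟩, fun hi => hi.1 Even.zero⟩
    | succ k ih =>
      have hs := halt (k : ℤ)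
      have he : Even ((k : ℤ) + 1) ↔ ¬ Even (k : ℤ) := Int.even_add_one
      revert ih hs he
      generalize UpL ω ((k : ℤ) + 1) = A
      generalize UpL ω (k : ℤ) = B
      generalize UpL ω 0 = C
      generalize Even ((k : ℤ) + 1) = D
      generalize Even (k : ℤ) = E
      tauto
    | pred k ih =>
      have hs := halt (-(k : ℤ) - 1)
      rw [show -(k : ℤ) - 1 + 1 = -(k : ℤ) from by ring] at hs
      have he : Even (-(k : ℤ)) ↔ ¬ Even (-(k : ℤ) - 1) := by
        have h' := Int.even_add_one (n := -(k : ℤ) - 1)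
        rw [show -(k : ℤ) - 1 + 1 = -(k : ℤ) from by ring] at h'
        exact h'
      revert ih hs he
      generalize UpL ω (-(k : ℤ) - 1) = A
      generalize UpL ω (-(k : ℤ)) = B
      generalize UpL ω 0 = C
      generalize Even (-(k : ℤ) - 1) = D
      generalize Even (-(k : ℤ)) = E
      tauto
  by_cases hc : UpL ω 0
  · have hLe : ∀ i : ℤ, UpL ω i ↔ Even i := by
      intro i; rw [hpar i]; simp [hc]
    have hω' : ∀ i j : ℤ, i < j → (ω j < ω i ↔ (Even i ∧ (j = i + 1 ∨ j = i + 3))) := by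
      intro i j hij
      rw [hinv i j hij]
      exact and_congr_left' (hLe i)
    have hτinj : Function.Injective (shiftPerm 1 oscillO) :=
      Function.LeftInverse.injective (g := shiftOInv) shift_li
    have hord := ord_of_inv hωinj hτinj hω' shift_inv_iff
    obtain ⟨u, v, h1, h2, h3, h4, h5⟩ :=
      assemble ω (shiftPerm 1 oscillO) shiftOInv hbij shift_li shift_ri hord
    exact ⟨u, v, h1, h2, h3, h4, Or.inr h5⟩
  · have hLo : ∀ i : ℤ, UpL ω i ↔ Odd i := by
      intro i; rw [hpar i]; simp [hc, Int.not_even_iff_odd]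
    have hω' : ∀ i j : ℤ, i < j → (ω j < ω i ↔ (Odd i ∧ (j = i + 1 ∨ j = i + 3))) := by
      intro i j hij
      rw [hinv i j hij]
      exact and_congr_left' (hLo i)
    have hτinj : Function.Injective oscillO :=
      Function.LeftInverse.injective (g := oscInv) osc_li
    have hord := ord_of_inv hωinj hτinj hω' osc_inv_iff
    obtain ⟨u, v, h1, h2, h3, h4, h5⟩ :=
      assemble ω oscillO oscInv hbij osc_li osc_ri hord
    exact ⟨u, v, h1, h2, h3, h4, Or.inl h5⟩
end

section
/- Let ω be an affine permutation whose inversion graph G(ω) is connected. Then G(ω) has an induced subgraph that is a doubly infinite path; that is, there exists an injective function h : ℤ → ℤ such that for all i, j ∈ ℤ, h(i) and h(j) are adjacent in G(ω) if and only if |i−j| = 1. -/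
open CategoryTheory SimpleGraph

namespace Stmt12Aux

/-- A partial bi-infinite geodesic segment on the window `[-R, R]`, zero outside. -/
def GoodFun (G : SimpleGraph ℤ) (B : ℤ) (R : ℕ) (f : ℤ → ℤ) : Prop :=
  (∀ i : ℤ, i < -(R : ℤ) ∨ (R : ℤ) < i → f i = 0) ∧ 0 < f 0 ∧ f 0 ≤ B ∧
    ∀ a b : ℤ, -(R : ℤ) ≤ a → a ≤ b → b ≤ (R : ℤ) →
      (G.dist (f a) (f b) : ℤ) = b - a

/-- Restrict to the window `[-R, R]`, zeroing outside. -/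
def resFun (R : ℕ) (f : ℤ → ℤ) : ℤ → ℤ :=
  fun i => if -(R : ℤ) ≤ i ∧ i ≤ (R : ℤ) then f i else 0

lemma GoodFun.res {G : SimpleGraph ℤ} {B : ℤ} {R : ℕ} {f : ℤ → ℤ}
    (hf : GoodFun G B R f) {R' : ℕ} (h : R' ≤ R) : GoodFun G B R' (resFun R' f) := by
  obtain ⟨h0, h1, h2, h3⟩ := hf
  have hRR : (R' : ℤ) ≤ (R : ℤ) := by exact_mod_cast h
  refine ⟨fun i hi => ?_, ?_, ?_, fun a b ha hab hb => ?_⟩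
  · unfold resFun; rw [if_neg (by omega)]
  · unfold resFun; rw [if_pos ⟨by omega, by omega⟩]; exact h1
  · unfold resFun; rw [if_pos ⟨by omega, by omega⟩]; exact h2
  · unfold resFun
    rw [if_pos ⟨ha, le_trans hab hb⟩, if_pos ⟨le_trans ha hab, hb⟩]
    exact h3 a b (by omega) hab (by omega)

/-- The type of partial geodesic segments at level `R`. -/
def XT (G : SimpleGraph ℤ) (B : ℤ) (R : ℕ) : Type := {f : ℤ → ℤ // GoodFun G B R f}

/-- The inverse system of partial geodesic segments. -/
def sysF (G : SimpleGraph ℤ) (B : ℤ) : ℕᵒᵖ ⥤ Type where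
  obj R := XT G B R.unop
  map {a b} φ := TypeCat.ofHom fun f => ⟨resFun b.unop f.1, f.2.res (leOfHom φ.unop)⟩
  map_id a := by
    ext : 2; funext f; apply Subtype.ext; funext i
    show resFun a.unop f.1 i = f.1 i
    by_cases h : -(a.unop : ℤ) ≤ i ∧ i ≤ (a.unop : ℤ)
    · simp only [resFun, if_pos h]
    · simp only [resFun, if_neg h]
      exact (f.2.1 i (by omega)).symm
  map_comp {a b c} φ ψ := by
    ext : 2; funext f; apply Subtype.ext; funext i
    have hcb : (c.unop : ℤ) ≤ (b.unop : ℤ) := by exact_mod_cast leOfHom ψ.unop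
    show resFun c.unop f.1 i = resFun c.unop (resFun b.unop f.1) i
    by_cases h : -(c.unop : ℤ) ≤ i ∧ i ≤ (c.unop : ℤ)
    · simp only [resFun, if_pos h]
      rw [if_pos ⟨by omega, by omega⟩]
    · simp only [resFun, if_neg h]

lemma walk_abs_le {G : SimpleGraph ℤ} {B : ℤ} (hB : ∀ i j : ℤ, G.Adj i j → |i - j| ≤ B)
    {u v : ℤ} (w : G.Walk u v) : |u - v| ≤ B * w.length := by
  induction w with
  | nil => simp
  | @cons u x v h p ih =>
    have h1 : |u - x| ≤ B := hB _ _ h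
    have h2 : |u - v| ≤ |u - x| + |x - v| := abs_sub_le u x v
    have h3 : (((p.cons h).length : ℕ) : ℤ) = (p.length : ℤ) + 1 := by
      simp [SimpleGraph.Walk.length_cons]
    rw [h3]
    have : B * ((p.length : ℤ) + 1) = B * p.length + B := by ring
    rw [this]
    omega

lemma dist_abs_le {G : SimpleGraph ℤ} (hconn : G.Connected) {B : ℤ}
    (hB : ∀ i j : ℤ, G.Adj i j → |i - j| ≤ B) (u v : ℤ) :
    |u - v| ≤ B * G.dist u v := by
  obtain ⟨w, hw⟩ := hconn.exists_walk_length_eq_dist u v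
  have := walk_abs_le hB w
  rwa [hw] at this

lemma dist_getVert_le {G : SimpleGraph ℤ} (hconn : G.Connected) {u v : ℤ} (w : G.Walk u v) :
    ∀ (k a : ℕ), a + k ≤ w.length → G.dist (w.getVert a) (w.getVert (a + k)) ≤ k := by
  intro k
  induction k with
  | zero => intro a _; simp [SimpleGraph.dist_self]
  | succ k ih =>
    intro a hk
    have h1 : G.dist (w.getVert a) (w.getVert (a + k)) ≤ k := ih a (by omega)
    have h2 : G.Adj (w.getVert (a + k)) (w.getVert (a + k + 1)) :=
      w.adj_getVert_succ (by omega)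
    have h3 : G.dist (w.getVert (a + k)) (w.getVert (a + k + 1)) = 1 :=
      SimpleGraph.dist_eq_one_iff_adj.mpr h2
    have h4 := hconn.dist_triangle (u := w.getVert a) (v := w.getVert (a + k))
      (w := w.getVert (a + k + 1))
    have h5 : a + (k + 1) = a + k + 1 := rfl
    rw [h5]
    omega

lemma geodesic_getVert {G : SimpleGraph ℤ} (hconn : G.Connected) {u v : ℤ} (w : G.Walk u v)
    (hw : w.length = G.dist u v) {a b : ℕ} (hab : a ≤ b) (hb : b ≤ w.length) :
    G.dist (w.getVert a) (w.getVert b) = b - a := by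
  have h1 : G.dist (w.getVert a) (w.getVert b) ≤ b - a := by
    have := dist_getVert_le hconn w (b - a) a (by omega)
    rwa [show a + (b - a) = b by omega] at this
  have h2 : G.dist u (w.getVert a) ≤ a := by
    have := dist_getVert_le hconn w a 0 (by omega)
    simpa [SimpleGraph.Walk.getVert_zero] using this
  have h3 : G.dist (w.getVert b) v ≤ w.length - b := by
    have := dist_getVert_le hconn w (w.length - b) b (by omega)
    rwa [show b + (w.length - b) = w.length by omega, SimpleGraph.Walk.getVert_length] at this
  have h4 := hconn.dist_triangle (u := u) (v := w.getVert a) (w := v)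
  have h5 := hconn.dist_triangle (u := w.getVert a) (v := w.getVert b) (w := v)
  omega

lemma exists_crossing {G : SimpleGraph ℤ} {B : ℤ} (hB : ∀ i j : ℤ, G.Adj i j → |i - j| ≤ B)
    {u v : ℤ} (w : G.Walk u v) (hu : u ≤ 0) (hv : 0 < v) :
    ∃ t : ℕ, t ≤ w.length ∧ 0 < w.getVert t ∧ w.getVert t ≤ B := by
  classical
  have hP : ∃ s : ℕ, 0 < w.getVert s := ⟨w.length, by rw [SimpleGraph.Walk.getVert_length]; exact hv⟩
  set t := Nat.find hP with htdef
  have ht : 0 < w.getVert t := Nat.find_spec hP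
  have ht0 : t ≠ 0 := by
    intro h
    rw [h, SimpleGraph.Walk.getVert_zero] at ht; omega
  have htl : t ≤ w.length := Nat.find_le (by rw [SimpleGraph.Walk.getVert_length]; exact hv)
  have hprev : ¬ 0 < w.getVert (t - 1) := Nat.find_min hP (by omega)
  have hadj : G.Adj (w.getVert (t - 1)) (w.getVert t) := by
    have := w.adj_getVert_succ (i := t - 1) (by omega)
    rwa [show t - 1 + 1 = t by omega] at this
  have habs := abs_le.mp (hB _ _ hadj)
  exact ⟨t, htl, ht, by omega⟩

lemma val_bound {G : SimpleGraph ℤ} (hconn : G.Connected) {B : ℤ} (hBpos : 0 < B)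
    (hB : ∀ i j : ℤ, G.Adj i j → |i - j| ≤ B) {R : ℕ} {f : ℤ → ℤ} (hf : GoodFun G B R f)
    {i : ℤ} (h1 : -(R : ℤ) ≤ i) (h2 : i ≤ (R : ℤ)) :
    -(B + B * R) ≤ f i ∧ f i ≤ B + B * R := by
  obtain ⟨-, hp1, hp2, hd⟩ := hf
  rcases le_total 0 i with hi | hi
  · have hdist : (G.dist (f 0) (f i) : ℤ) = i - 0 := hd 0 i (by omega) hi h2
    have := dist_abs_le hconn hB (f 0) (f i)
    rw [hdist] at this
    have hbound : B * (i - 0) ≤ B * R := by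
      apply mul_le_mul_of_nonneg_left (by omega) hBpos.le
    have := abs_le.mp (le_trans this hbound)
    omega
  · have hdist : (G.dist (f i) (f 0) : ℤ) = 0 - i := hd i 0 h1 hi (by omega)
    have := dist_abs_le hconn hB (f i) (f 0)
    rw [hdist] at this
    have hbound : B * (0 - i) ≤ B * R := by
      apply mul_le_mul_of_nonneg_left (by omega) hBpos.le
    have := abs_le.mp (le_trans this hbound)
    omega

lemma XT_finite {G : SimpleGraph ℤ} (hconn : G.Connected) {B : ℤ} (hBpos : 0 < B)
    (hB : ∀ i j : ℤ, G.Adj i j → |i - j| ≤ B) (R : ℕ) : Finite (XT G B R) := by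
  haveI : Finite ↥(Set.Icc (-(R : ℤ)) (R : ℤ)) := (Set.finite_Icc _ _).to_subtype
  haveI : Finite ↥(Set.Icc (-(B + B * R)) (B + B * R)) := (Set.finite_Icc _ _).to_subtype
  apply Finite.of_injective
    (f := fun (f : XT G B R) (x : ↥(Set.Icc (-(R : ℤ)) (R : ℤ))) =>
      (⟨f.1 x.1, by
        have hx := x.2
        rw [Set.mem_Icc] at hx
        have := val_bound hconn hBpos hB f.2 hx.1 hx.2
        rw [Set.mem_Icc]
        exact this⟩ : ↥(Set.Icc (-(B + B * R)) (B + B * R))))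
  intro f g hfg
  apply Subtype.ext; funext i
  by_cases h : -(R : ℤ) ≤ i ∧ i ≤ (R : ℤ)
  · have h2 := congrFun hfg ⟨i, Set.mem_Icc.mpr h⟩
    simpa using congrArg Subtype.val h2
  · rw [f.2.1 i (by omega), g.2.1 i (by omega)]

lemma XT_nonempty {G : SimpleGraph ℤ} (hconn : G.Connected) {B : ℤ} (hBpos : 0 < B)
    (hB : ∀ i j : ℤ, G.Adj i j → |i - j| ≤ B) (R : ℕ) : Nonempty (XT G B R) := by
  classical
  set K : ℤ := B * ((R : ℤ) + 1) with hK
  have hKpos : 0 < K := mul_pos hBpos (by positivity)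
  obtain ⟨w, hw⟩ := hconn.exists_walk_length_eq_dist (-K) K
  obtain ⟨t, htl, ht1, ht2⟩ := exists_crossing hB w (by omega) hKpos
  -- t is far from both ends
  have hd1 : G.dist (-K) (w.getVert t) ≤ t := by
    have := dist_getVert_le hconn w t 0 (by omega)
    simpa [SimpleGraph.Walk.getVert_zero] using this
  have hb1 : |(-K) - w.getVert t| ≤ B * t := by
    refine le_trans (dist_abs_le hconn hB _ _) ?_
    exact mul_le_mul_of_nonneg_left (by exact_mod_cast hd1) hBpos.le
  have htR : (R : ℤ) ≤ (t : ℤ) := by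
    have h5 := abs_le.mp hb1
    have h6 : B * ((R : ℤ) + 1) < B * (t : ℤ) := by omega
    have := (mul_lt_mul_iff_right₀ hBpos).mp h6
    omega
  have hd2 : G.dist (w.getVert t) K ≤ w.length - t := by
    have := dist_getVert_le hconn w (w.length - t) t (by omega)
    rwa [show t + (w.length - t) = w.length by omega, SimpleGraph.Walk.getVert_length] at this
  have hb2 : |w.getVert t - K| ≤ B * ((w.length : ℤ) - t) := by
    refine le_trans (dist_abs_le hconn hB _ _) ?_
    have : ((G.dist (w.getVert t) K : ℕ) : ℤ) ≤ (w.length : ℤ) - t := by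
      have := hd2; omega
    exact mul_le_mul_of_nonneg_left this hBpos.le
  have htL : (t : ℤ) + (R : ℤ) ≤ (w.length : ℤ) := by
    have h5 := abs_le.mp hb2
    have hKexp : K = B * (R : ℤ) + B := by rw [hK]; ring
    have h6 : B * (R : ℤ) ≤ B * ((w.length : ℤ) - t) := by linarith [h5.1, h5.2]
    have := (mul_le_mul_iff_right₀ hBpos).mp h6
    omega
  refine ⟨⟨fun a => if -(R : ℤ) ≤ a ∧ a ≤ (R : ℤ) then w.getVert ((t : ℤ) + a).toNat else 0,
    ?_, ?_, ?_, ?_⟩⟩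
  · intro i hi
    dsimp only
    rw [if_neg (by omega)]
  · dsimp only
    rw [if_pos ⟨by omega, by omega⟩, show ((t : ℤ) + 0).toNat = t by omega]
    exact ht1
  · dsimp only
    rw [if_pos ⟨by omega, by omega⟩, show ((t : ℤ) + 0).toNat = t by omega]
    exact ht2
  · intro a b ha hab hb
    dsimp only
    rw [if_pos ⟨ha, le_trans hab hb⟩, if_pos ⟨le_trans ha hab, hb⟩]
    have hkey := geodesic_getVert hconn w hw (a := ((t : ℤ) + a).toNat)
      (b := ((t : ℤ) + b).toNat) (by omega) (by omega)
    rw [hkey]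
    omega

end Stmt12Aux

open Stmt12Aux

/-- a connected affine permutation has an induced subgraph of its
inversion graph that is a doubly infinite path. -/
theorem stmt12 (n : ℕ) (hn : 1 ≤ n) (ω : ℤ → ℤ) (hω : IsAffinePerm n ω)
    (hconn : (invGraph ω).Connected) :
    ∃ h : ℤ → ℤ, Function.Injective h ∧
      ∀ i j : ℤ, (invGraph ω).Adj (h i) (h j) ↔ |i - j| = 1 := by
  classical
  obtain ⟨-, hper, -⟩ := hω
  -- periodicity in both directions
  have hper' : ∀ (k : ℤ) (i : ℤ), ω (i + k * n) = ω i + k * n := by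
    intro k
    induction k using Int.induction_on with
    | zero => simp
    | succ k ih =>
      intro i
      have h1 : i + ((k : ℤ) + 1) * n = (i + k * n) + n := by ring
      rw [h1, hper, ih]; ring
    | pred k ih =>
      intro i
      have hdown : ∀ j : ℤ, ω (j - n) = ω j - n := by
        intro j
        have := hper (j - n)
        have h2 : j - (n : ℤ) + n = j := by ring
        rw [h2] at this
        omega
      have h1 : i + (-(k : ℤ) - 1) * n = (i + (-(k : ℤ)) * n) - n := by ring
      rw [h1, hdown, ih]; ring
  have hnpos : (0 : ℤ) < (n : ℤ) := by exact_mod_cast hn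
  have hne : (Finset.Icc (0 : ℤ) ((n : ℤ) - 1)).Nonempty :=
    ⟨0, Finset.mem_Icc.mpr ⟨le_refl 0, by omega⟩⟩
  set M := (Finset.Icc (0 : ℤ) ((n : ℤ) - 1)).sup' hne (fun i => |ω i - i|) with hMdef
  have hM : ∀ i : ℤ, |ω i - i| ≤ M := by
    intro i
    have h2 : i % (n : ℤ) + (i / (n : ℤ)) * n = i := Int.emod_add_ediv_mul i n
    have h1 : ω i - i = ω (i % n) - (i % n) := by
      have h3 : ω (i % (n : ℤ) + (i / (n : ℤ)) * n) = ω (i % n) + (i / (n : ℤ)) * n :=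
        hper' (i / n) (i % n)
      rw [h2] at h3
      omega
    rw [h1]
    exact Finset.le_sup' (fun i => |ω i - i|) (Finset.mem_Icc.mpr
      ⟨Int.emod_nonneg i hnpos.ne', by have := Int.emod_lt_of_pos i hnpos; omega⟩)
  have hM0 : 0 ≤ M := le_trans (abs_nonneg _) (hM 0)
  set B : ℤ := 2 * M + 1 with hBdef
  have hBpos : 0 < B := by omega
  have hB : ∀ i j : ℤ, (invGraph ω).Adj i j → |i - j| ≤ B := by
    intro i j hij
    have h1 := abs_le.mp (hM i)
    have h2 := abs_le.mp (hM j)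
    rcases hij with ⟨hlt, hval⟩ | ⟨hlt, hval⟩
    · rw [abs_of_nonpos (by omega)]; omega
    · rw [abs_of_nonneg (by omega)]; omega
  haveI hFin : ∀ j : ℕᵒᵖ, Finite ((sysF (invGraph ω) B).obj j) :=
    fun j => XT_finite hconn hBpos hB j.unop
  haveI hNe : ∀ j : ℕᵒᵖ, Nonempty ((sysF (invGraph ω) B).obj j) :=
    fun j => XT_nonempty hconn hBpos hB j.unop
  obtain ⟨s, hs⟩ := nonempty_sections_of_finite_inverse_system (sysF (invGraph ω) B)
  have hcompat : ∀ (R R' : ℕ), R' ≤ R → ∀ i : ℤ, -(R' : ℤ) ≤ i → i ≤ (R' : ℤ) →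
      (s (Opposite.op R)).1 i = (s (Opposite.op R')).1 i := by
    intro R R' hle i h1 h2
    have h3 := hs (CategoryTheory.homOfLE hle).op
    have h4 : resFun R' (s (Opposite.op R)).1 = (s (Opposite.op R')).1 :=
      congrArg Subtype.val h3
    rw [← h4]
    unfold resFun
    rw [if_pos ⟨h1, h2⟩]
  set h : ℤ → ℤ := fun i => (s (Opposite.op i.natAbs)).1 i with hh
  have key : ∀ i j : ℤ, (((invGraph ω).dist (h i) (h j) : ℕ) : ℤ) = |i - j| := by
    have key' : ∀ i j : ℤ, i ≤ j → (((invGraph ω).dist (h i) (h j) : ℕ) : ℤ) = j - i := by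
      intro i j hij
      set R := max i.natAbs j.natAbs with hR
      have hiR : i.natAbs ≤ R := le_max_left _ _
      have hjR : j.natAbs ≤ R := le_max_right _ _
      have hi : h i = (s (Opposite.op R)).1 i :=
        (hcompat R i.natAbs hiR i (by omega) (by omega)).symm
      have hj : h j = (s (Opposite.op R)).1 j :=
        (hcompat R j.natAbs hjR j (by omega) (by omega)).symm
      rw [hi, hj]
      exact (s (Opposite.op R)).2.2.2.2 i j (by simp only [Opposite.unop_op]; omega) hij (by simp only [Opposite.unop_op]; omega)
    intro i j
    rcases le_total i j with hle | hle
    · rw [abs_sub_comm, abs_of_nonneg (by omega)]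
      exact key' i j hle
    · rw [abs_of_nonneg (by omega), SimpleGraph.dist_comm]
      exact key' j i hle
  refine ⟨h, ?_, ?_⟩
  · intro i j hij
    have h1 := key i j
    rw [hij, SimpleGraph.dist_self] at h1
    have h2 : |i - j| = 0 := by exact_mod_cast h1.symm
    exact sub_eq_zero.mp (abs_eq_zero.mp h2)
  · intro i j
    constructor
    · intro hadj
      have h1 := SimpleGraph.dist_eq_one_iff_adj.mpr hadj
      have h2 := key i j
      rw [h1] at h2
      exact_mod_cast h2.symm
    · intro habs
      have h2 := key i j
      rw [habs] at h2
      have h3 : (invGraph ω).dist (h i) (h j) = 1 := by exact_mod_cast h2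
      exact SimpleGraph.dist_eq_one_iff_adj.mp h3
end

section
/- For all integers n ≥ 0 and 0 ≤ k ≤ n: (a) the number of permutations of size n with exactly m fixed points and exactly k excedances equals binomial(n,m) · d(n−m, k); and (b) d(n,k) = ∑_{m=0}^{n−k} (−1)^m · binomial(n,m) · a(n−m, k), as an identity of integers. -/
section Stmt16Helpers
open Finset

lemma exc_extendDomain {n c : ℕ} (T : Finset (Fin n)) (f : Fin c ≃o {x // x ∈ T})
    (τ : Equiv.Perm (Fin c)) : excCount (τ.extendDomain f.toEquiv) = excCount τ := by
  classical
  unfold excCount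
  have himg : (univ.filter fun x => x < (τ.extendDomain f.toEquiv) x) =
      (univ.filter fun i => i < τ i).image (fun i => ((f i : {x // x ∈ T}) : Fin n)) := by
    ext x
    simp only [Finset.mem_filter, Finset.mem_image, Finset.mem_univ, true_and]
    constructor
    · intro hx
      by_cases hxT : x ∈ T
      · refine ⟨f.symm ⟨x, hxT⟩, ?_, ?_⟩
        · have h1 : τ.extendDomain f.toEquiv x = ((f (τ (f.symm ⟨x, hxT⟩)) : _) : Fin n) := by
            rw [Equiv.Perm.extendDomain_apply_subtype _ _ hxT]; rfl
          have h2 : x = ((f (f.symm ⟨x, hxT⟩) : _) : Fin n) := by simp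
          rw [h1] at hx
          have hx3 : ((f (f.symm ⟨x, hxT⟩) : _) : Fin n) < ((f (τ (f.symm ⟨x, hxT⟩)) : _) : Fin n) :=
            lt_of_le_of_lt (le_of_eq h2.symm) hx
          exact f.lt_iff_lt.mp (Subtype.coe_lt_coe.mp hx3)
        · simp
      · rw [Equiv.Perm.extendDomain_apply_not_subtype _ _ hxT] at hx
        exact absurd hx (lt_irrefl x)
    · rintro ⟨i, hi, rfl⟩
      have h1 : τ.extendDomain f.toEquiv ((f i : {x // x ∈ T}) : Fin n)
          = ((f (τ i) : _) : Fin n) := by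
        have := Equiv.Perm.extendDomain_apply_image (f := f.toEquiv) τ i
        exact this
      rw [h1]
      exact Subtype.coe_lt_coe.mpr (f.lt_iff_lt.mpr hi)
  rw [himg, Finset.card_image_of_injective]
  exact fun a b hab => f.injective (Subtype.ext hab)

lemma card_fixed (n k : ℕ) (S : Finset (Fin n)) :
    Nat.card {π : Equiv.Perm (Fin n) //
        (Finset.univ.filter fun i => π i = i) = S ∧ excCount π = k} =
      derangD Sᶜ.card k := by
  classical
  rw [derangD]
  refine (Nat.card_congr (Equiv.symm ?_)).symm
  set f : Fin Sᶜ.card ≃o {x // x ∈ Sᶜ} := Sᶜ.orderIsoOfFin rfl with hf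
  have hmem : ∀ (π : Equiv.Perm (Fin n)), (Finset.univ.filter fun i => π i = i) = S →
      ∀ x : Fin n, π x ∈ Sᶜ ↔ x ∈ Sᶜ := by
    intro π hπ x
    have hfix : ∀ y : Fin n, y ∈ S ↔ π y = y := by
      intro y
      rw [← hπ]; simp
    simp only [Finset.mem_compl]
    rw [iff_comm]
    constructor
    · intro hx hπx
      have h1 : π (π x) = π x := (hfix (π x)).mp hπx
      have : π x = x := π.injective h1
      exact hx ((hfix x).mpr this)
    · intro hπx hx
      have : π x = x := (hfix x).mp hx
      rw [this] at hπx
      exact hπx ((hfix x).mpr this)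
  have hext : ∀ (π : Equiv.Perm (Fin n)) (h : (Finset.univ.filter fun i => π i = i) = S),
      ((f.toEquiv.symm).permCongr (π.subtypePerm (hmem π h))).extendDomain f.toEquiv = π := by
    intro π h
    ext x
    by_cases hx : x ∈ Sᶜ
    · rw [Equiv.Perm.extendDomain_apply_subtype _ _ hx]
      simp [Equiv.permCongr_apply]
    · rw [Equiv.Perm.extendDomain_apply_not_subtype _ _ hx]
      have hxS : x ∈ S := by simpa using hx
      rw [← h] at hxS
      exact congrArg Fin.val ((by simpa using hxS : π x = x)).symm
  have hinj : ∀ τ₁ τ₂ : Equiv.Perm (Fin Sᶜ.card),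
      τ₁.extendDomain f.toEquiv = τ₂.extendDomain f.toEquiv → τ₁ = τ₂ := by
    intro τ₁ τ₂ h
    ext i
    have h1 : ((f.toEquiv (τ₁ i) : _) : Fin n) = ((f.toEquiv (τ₂ i) : _) : Fin n) := by
      have e1 := Equiv.Perm.extendDomain_apply_image (f := f.toEquiv) τ₁ i
      have e2 := Equiv.Perm.extendDomain_apply_image (f := f.toEquiv) τ₂ i
      rw [← e1, ← e2, h]
    exact congrArg Fin.val (f.toEquiv.injective (Subtype.ext h1))
  have hfixset : ∀ (τ : Equiv.Perm (Fin Sᶜ.card)), (∀ i, τ i ≠ i) →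
      (Finset.univ.filter fun x => (τ.extendDomain f.toEquiv) x = x) = S := by
    intro τ hτ
    ext x
    simp only [Finset.mem_filter, Finset.mem_univ, true_and]
    by_cases hx : x ∈ Sᶜ
    · rw [Equiv.Perm.extendDomain_apply_subtype _ _ hx]
      constructor
      · intro hfix
        exfalso
        have hcoe : (f (τ (f.symm ⟨x, hx⟩)) : {x // x ∈ Sᶜ}) = f (f.symm ⟨x, hx⟩) := by
          apply Subtype.ext
          rw [OrderIso.apply_symm_apply]
          exact hfix
        exact hτ _ (f.injective hcoe)
      · intro hxS
        exact absurd hxS (by simpa using hx)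
    · rw [Equiv.Perm.extendDomain_apply_not_subtype _ _ hx]
      simpa using (by simpa using hx : x ∈ S)
  -- forward : π ↦ τ, backward : τ ↦ extendDomain
  refine Equiv.mk
    (fun π => ⟨(f.toEquiv.symm).permCongr (π.1.subtypePerm (hmem π.1 π.2.1)), ?_, ?_⟩)
    (fun τ => ⟨τ.1.extendDomain f.toEquiv, hfixset τ.1 τ.2.1, ?_⟩) ?_ ?_
  · -- derangement
    intro i hi
    have h2 : (π.1.subtypePerm (hmem π.1 π.2.1)) (f i) = f i := by
      have := congrArg f.toEquiv hi
      simpa [Equiv.permCongr_apply] using this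
    have h3 : π.1 ((f i : _) : Fin n) = ((f i : _) : Fin n) := by
      simpa [Subtype.ext_iff] using h2
    have h4 : ((f i : _) : Fin n) ∈ Finset.univ.filter fun j => π.1 j = j := by
      simpa using h3
    rw [π.2.1] at h4
    have h8 := (f i).2
    rw [Finset.mem_compl] at h8
    exact h8 h4
  · -- excCount τ' = k
    have h5 := exc_extendDomain Sᶜ f ((f.toEquiv.symm).permCongr (π.1.subtypePerm (hmem π.1 π.2.1)))
    rw [hext π.1 π.2.1] at h5
    rw [← h5]; exact π.2.2
  · -- excCount extendDomain = k
    rw [exc_extendDomain Sᶜ f τ.1]; exact τ.2.2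
  · -- left_inv
    intro π
    exact Subtype.ext (hext π.1 π.2.1)
  · -- right_inv
    intro τ
    apply Subtype.ext
    exact hinj _ _ (hext (τ.1.extendDomain f.toEquiv) (hfixset τ.1 τ.2.1))

lemma parta (n k m : ℕ) :
    Nat.card {π : Equiv.Perm (Fin n) // numFixedPoints π = m ∧ excCount π = k} =
      Nat.choose n m * derangD (n - m) k := by
  classical
  rw [Nat.card_eq_fintype_card, Fintype.card_subtype]
  have hsplit : (univ.filter fun π : Equiv.Perm (Fin n) => numFixedPoints π = m ∧ excCount π = k)
      = (Finset.powersetCard m (univ : Finset (Fin n))).biUnion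
          (fun S => univ.filter fun π : Equiv.Perm (Fin n) =>
            (univ.filter fun i => π i = i) = S ∧ excCount π = k) := by
    ext π
    simp only [mem_filter, mem_biUnion, Finset.mem_powersetCard_univ, mem_univ, true_and]
    constructor
    · rintro ⟨h1, h2⟩
      exact ⟨univ.filter fun i => π i = i, h1, rfl, h2⟩
    · rintro ⟨S, hS, h1, h2⟩
      refine ⟨?_, h2⟩
      rw [numFixedPoints, h1]; exact hS
  rw [hsplit, Finset.card_biUnion]
  · have hterm : ∀ S ∈ Finset.powersetCard m (univ : Finset (Fin n)),
        (univ.filter fun π : Equiv.Perm (Fin n) =>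
          (univ.filter fun i => π i = i) = S ∧ excCount π = k).card = derangD (n - m) k := by
      intro S hS
      have hc := card_fixed n k S
      rw [Nat.card_eq_fintype_card, Fintype.card_subtype] at hc
      rw [hc]
      congr 1
      rw [Finset.card_compl, Fintype.card_fin, Finset.mem_powersetCard_univ.mp hS]
    rw [Finset.sum_congr rfl hterm, Finset.sum_const, Finset.card_powersetCard,
      Finset.card_univ, Fintype.card_fin, smul_eq_mul]
  · intro S hS T hT hST
    apply Finset.disjoint_left.mpr
    intro π hπS hπT
    exact hST (by rw [← (mem_filter.mp hπS).2.1, (mem_filter.mp hπT).2.1])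

lemma euler_sum (j k : ℕ) :
    eulerianA j k = ∑ m ∈ Finset.range (j + 1), Nat.choose j m * derangD (j - m) k := by
  classical
  rw [eulerianA, Nat.card_eq_fintype_card, Fintype.card_subtype]
  rw [Finset.card_eq_sum_card_fiberwise (f := numFixedPoints) (t := Finset.range (j + 1))
      (fun π _ => by
        rw [Finset.mem_coe, Finset.mem_range, Nat.lt_succ_iff, numFixedPoints]
        exact le_trans (Finset.card_filter_le _ _) (by simp))]
  apply Finset.sum_congr rfl
  intro m _
  have hff : (univ.filter fun π : Equiv.Perm (Fin j) => excCount π = k).filter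
      (fun π => numFixedPoints π = m)
      = univ.filter fun π : Equiv.Perm (Fin j) => numFixedPoints π = m ∧ excCount π = k := by
    rw [Finset.filter_filter]
    apply Finset.filter_congr
    intro π _
    tauto
  rw [hff, ← Fintype.card_subtype, ← Nat.card_eq_fintype_card, parta]

lemma euler_zero (j k : ℕ) (h : j < k) : eulerianA j k = 0 := by
  rw [eulerianA]
  refine Nat.card_eq_zero.mpr (Or.inl ⟨?_⟩)
  rintro ⟨π, hπ⟩
  have hle : excCount π ≤ j := le_trans (Finset.card_filter_le _ _) (by simp)
  omega

lemma tri_choose {n m i : ℕ} (h : m + i ≤ n) :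
    n.choose m * (n - m).choose i = n.choose i * (n - i).choose m := by
  have h1 := Nat.choose_mul (n := n) (Nat.le_add_right m i)
  have h2 := Nat.choose_mul (n := n) (Nat.le_add_left i m)
  simp only [Nat.add_sub_cancel, Nat.add_sub_cancel_left] at h1 h2
  rw [← h1, ← h2, Nat.choose_symm_add]

lemma partb (n k : ℕ) :
    (derangD n k : ℤ) =
      ∑ m ∈ Finset.range (n + 1), (-1 : ℤ) ^ m * Nat.choose n m * eulerianA (n - m) k := by
  have hA : ∀ j : ℕ, (eulerianA j k : ℤ)
      = ∑ i ∈ Finset.range (j + 1), (Nat.choose j i : ℤ) * derangD i k := by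
    intro j
    rw [euler_sum]
    push_cast
    rw [← Finset.sum_range_reflect]
    apply Finset.sum_congr rfl
    intro i hi
    rw [Finset.mem_range] at hi
    have h1 : j + 1 - 1 - i = j - i := by omega
    have h2 : j - (j - i) = i := by omega
    have h3 : Nat.choose j (j - i) = Nat.choose j i := Nat.choose_symm (by omega)
    rw [h1, h2, h3]
  symm
  calc ∑ m ∈ Finset.range (n + 1), (-1 : ℤ) ^ m * Nat.choose n m * eulerianA (n - m) k
      = ∑ m ∈ Finset.range (n + 1), ∑ i ∈ Finset.range (n + 1),
          (-1 : ℤ) ^ m * Nat.choose n m * (Nat.choose (n - m) i * derangD i k) := by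
        apply Finset.sum_congr rfl
        intro m hm
        rw [Finset.mem_range, Nat.lt_succ_iff] at hm
        rw [hA (n - m), Finset.mul_sum]
        apply Finset.sum_subset
        · exact Finset.range_subset_range.mpr (by omega)
        · intro i _ hi
          rw [Finset.mem_range, Nat.lt_succ_iff, not_le] at hi
          rw [Nat.choose_eq_zero_of_lt hi]
          push_cast
          ring
    _ = ∑ i ∈ Finset.range (n + 1),
          (∑ m ∈ Finset.range (n + 1), (-1 : ℤ) ^ m * (Nat.choose n m * Nat.choose (n - m) i))
            * derangD i k := by
        rw [Finset.sum_comm]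
        apply Finset.sum_congr rfl
        intro i _
        rw [Finset.sum_mul]
        apply Finset.sum_congr rfl
        intro m _
        ring
    _ = ∑ i ∈ Finset.range (n + 1),
          ((Nat.choose n i : ℤ) *
            ∑ m ∈ Finset.range (n - i + 1), (-1 : ℤ) ^ m * Nat.choose (n - i) m)
            * derangD i k := by
        apply Finset.sum_congr rfl
        intro i hi
        rw [Finset.mem_range, Nat.lt_succ_iff] at hi
        congr 1
        rw [Finset.mul_sum]
        rw [← Finset.sum_subset (Finset.range_subset_range.mpr (show n - i + 1 ≤ n + 1 by omega))
            (fun m hm' hm => by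
              rw [Finset.mem_range, Nat.lt_succ_iff, not_le] at hm
              rw [Finset.mem_range, Nat.lt_succ_iff] at hm'
              rw [Nat.choose_eq_zero_of_lt (show n - m < i by omega)]
              push_cast
              ring)]
        apply Finset.sum_congr rfl
        intro m hm
        rw [Finset.mem_range, Nat.lt_succ_iff] at hm
        have htri : ((n.choose m : ℤ)) * ((n - m).choose i : ℤ)
            = (n.choose i : ℤ) * ((n - i).choose m : ℤ) := by
          exact_mod_cast tri_choose (show m + i ≤ n by omega)
        linear_combination ((-1 : ℤ) ^ m) * htri
    _ = ∑ i ∈ Finset.range (n + 1),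
          ((Nat.choose n i : ℤ) * (if n - i = 0 then 1 else 0)) * derangD i k := by
        apply Finset.sum_congr rfl
        intro i _
        rw [show (∑ m ∈ Finset.range (n - i + 1), (-1 : ℤ) ^ m * Nat.choose (n - i) m)
            = (if n - i = 0 then 1 else 0) from Int.alternating_sum_range_choose]
    _ = (derangD n k : ℤ) := by
        rw [Finset.sum_eq_single n]
        · simp
        · intro i hi hne
          rw [Finset.mem_range, Nat.lt_succ_iff] at hi
          rw [if_neg (by omega)]
          ring
        · intro h
          exact absurd (Finset.self_mem_range_succ n) h


end Stmt16Helpers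

/-- (a) the number of permutations of size `n` with `m` fixed points and
`k` excedances is `C(n,m)·d(n−m,k)`; (b) `d(n,k) = ∑_{m=0}^{n−k} (−1)^m C(n,m) a(n−m,k)`. -/
theorem stmt16 (n k : ℕ) (hk : k ≤ n) :
    (∀ m : ℕ,
      Nat.card {π : Equiv.Perm (Fin n) // numFixedPoints π = m ∧ excCount π = k} =
        Nat.choose n m * derangD (n - m) k) ∧
    ((derangD n k : ℤ) =
      ∑ m ∈ Finset.range (n - k + 1),
        (-1 : ℤ) ^ m * Nat.choose n m * eulerianA (n - m) k) := by
  refine ⟨fun m => parta n k m, ?_⟩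
  rw [partb n k]
  symm
  apply Finset.sum_subset (Finset.range_subset_range.mpr (by omega))
  intro m hm hmn
  rw [Finset.mem_range, Nat.lt_succ_iff] at hm
  rw [Finset.mem_range, Nat.lt_succ_iff, not_le] at hmn
  rw [euler_zero (n - m) k (by omega)]
  push_cast
  ring
end
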